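/- arXiv:2409.06975 — 5 statements merged into one kernel-verified Lean document; each statement's English description precedes it below -/
import Mathlib

section
/- For every non-repetitive non-returning nondeterministic finite automaton with translucent letters (nr-nr-NFAwtl) A, there exists a nondeterministic finite automaton B over the same alphabet such that L(B) = L(A). Hence the language class accepted by nr-nr-NFAwtls equals the class of regular languages. -/
/-- A nondeterministic finite automaton with translucent letters (NFAwtl). -/
structure NFAwtl (Q α : Type) where
  τ : Q → Set α
  I : Set Q
  F : Set Q
  δ : Q → α → Set Q
  tr : ∀ q a, a ∈ τ q → δ q a = ∅

namespace NFAwtl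

variable {Q α : Type}

/-- One computation step of an NFAwtl: delete the leftmost non-translucent letter
and change state (the head returns to the left end). -/
def Step (A : NFAwtl Q α) : Q × List α → Q × List α → Prop := fun c c' =>
  ∃ u a v, c.2 = u ++ a :: v ∧ (∀ x ∈ u, x ∈ A.τ c.1) ∧ a ∉ A.τ c.1 ∧
    c'.1 ∈ A.δ c.1 a ∧ c'.2 = u ++ v

/-- Acceptance: from some initial state, reach a configuration whose remaining
letters are all translucent for a final state. -/
def Accepts (A : NFAwtl Q α) (w : List α) : Prop :=
  ∃ q₀ ∈ A.I, ∃ q w', Relation.ReflTransGen A.Step (q₀, w) (q, w') ∧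
    (∀ x ∈ w', x ∈ A.τ q) ∧ q ∈ A.F

def lang (A : NFAwtl Q α) : Set (List α) := { w | A.Accepts w }

/-- A DFAwtl: single initial state and at most one transition per state/letter. -/
def Deterministic (A : NFAwtl Q α) : Prop :=
  (∃ q₀, A.I = {q₀}) ∧ ∀ q a, (A.δ q a).Subsingleton

end NFAwtl

/-- A repetitive NFAwtl (RNFAwtl): on the end-of-tape marker it may accept
(states in `Facc`) or change state via `δend` and continue. -/
structure RNFAwtl (Q α : Type) where
  τ : Q → Set α
  I : Set Q
  δ : Q → α → Set Q
  δend : Q → Set Q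
  Facc : Set Q
  tr : ∀ q a, a ∈ τ q → δ q a = ∅
  accEnd : ∀ q, q ∈ Facc → δend q = ∅

namespace RNFAwtl

variable {Q α : Type}

/-- One computation step of an RNFAwtl: either delete the leftmost
non-translucent letter, or, when all remaining letters are translucent,
change state via a `◁`-transition and continue. -/
def Step (A : RNFAwtl Q α) : Q × List α → Q × List α → Prop := fun c c' =>
  (∃ u a v, c.2 = u ++ a :: v ∧ (∀ x ∈ u, x ∈ A.τ c.1) ∧ a ∉ A.τ c.1 ∧
    c'.1 ∈ A.δ c.1 a ∧ c'.2 = u ++ v)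
  ∨ ((∀ x ∈ c.2, x ∈ A.τ c.1) ∧ c'.1 ∈ A.δend c.1 ∧ c'.2 = c.2)

def Accepts (A : RNFAwtl Q α) (w : List α) : Prop :=
  ∃ q₀ ∈ A.I, ∃ q w', Relation.ReflTransGen A.Step (q₀, w) (q, w') ∧
    (∀ x ∈ w', x ∈ A.τ q) ∧ q ∈ A.Facc

def lang (A : RNFAwtl Q α) : Set (List α) := { w | A.Accepts w }

/-- An RDFAwtl: single initial state and deterministic transitions. -/
def Deterministic (A : RNFAwtl Q α) : Prop :=
  (∃ q₀, A.I = {q₀}) ∧ (∀ q a, (A.δ q a).Subsingleton) ∧ ∀ q, (A.δend q).Subsingleton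

end RNFAwtl

/-- A non-returning repetitive NFAwtl (nr-NFAwtl): the head continues from the
position of the last deleted letter; on the end-of-tape marker it may change
state and return the head to the left end. -/
structure NrNFAwtl (Q α : Type) where
  τ : Q → Set α
  I : Set Q
  δ : Q → α → Set Q
  δend : Q → Set Q
  Facc : Set Q
  tr : ∀ q a, a ∈ τ q → δ q a = ∅
  accEnd : ∀ q, q ∈ Facc → δend q = ∅

namespace NrNFAwtl

variable {Q α : Type}

/-- Configurations are `(x, q, w)`: `x` is the already-skipped prefix, the head
is on the first letter of `w`. -/
def Step (A : NrNFAwtl Q α) :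
    List α × Q × List α → List α × Q × List α → Prop := fun c c' =>
  (∃ u a v, c.2.2 = u ++ a :: v ∧ (∀ x ∈ u, x ∈ A.τ c.2.1) ∧ a ∉ A.τ c.2.1 ∧
    c'.2.1 ∈ A.δ c.2.1 a ∧ c'.1 = c.1 ++ u ∧ c'.2.2 = v)
  ∨ ((∀ x ∈ c.2.2, x ∈ A.τ c.2.1) ∧ c'.2.1 ∈ A.δend c.2.1 ∧ c'.1 = [] ∧
    c'.2.2 = c.1 ++ c.2.2)

def Accepts (A : NrNFAwtl Q α) (w : List α) : Prop :=
  ∃ q₀ ∈ A.I, ∃ x q w', Relation.ReflTransGen A.Step ([], q₀, w) (x, q, w') ∧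
    (∀ y ∈ w', y ∈ A.τ q) ∧ q ∈ A.Facc

def lang (A : NrNFAwtl Q α) : Set (List α) := { w | A.Accepts w }

def Deterministic (A : NrNFAwtl Q α) : Prop :=
  (∃ q₀, A.I = {q₀}) ∧ (∀ q a, (A.δ q a).Subsingleton) ∧ ∀ q, (A.δend q).Subsingleton

end NrNFAwtl

/-- A non-repetitive non-returning NFAwtl (nr-nr-NFAwtl): non-returning, and it
must halt as soon as all remaining letters to the right are translucent. -/
structure NrnrNFAwtl (Q α : Type) where
  τ : Q → Set α
  I : Set Q
  F : Set Q
  δ : Q → α → Set Q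
  tr : ∀ q a, a ∈ τ q → δ q a = ∅

namespace NrnrNFAwtl

variable {Q α : Type}

def Step (A : NrnrNFAwtl Q α) :
    List α × Q × List α → List α × Q × List α → Prop := fun c c' =>
  ∃ u a v, c.2.2 = u ++ a :: v ∧ (∀ x ∈ u, x ∈ A.τ c.2.1) ∧ a ∉ A.τ c.2.1 ∧
    c'.2.1 ∈ A.δ c.2.1 a ∧ c'.1 = c.1 ++ u ∧ c'.2.2 = v

def Accepts (A : NrnrNFAwtl Q α) (w : List α) : Prop :=
  ∃ q₀ ∈ A.I, ∃ x q w', Relation.ReflTransGen A.Step ([], q₀, w) (x, q, w') ∧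
    (∀ y ∈ w', y ∈ A.τ q) ∧ q ∈ A.F

def lang (A : NrnrNFAwtl Q α) : Set (List α) := { w | A.Accepts w }

def Deterministic (A : NrnrNFAwtl Q α) : Prop :=
  (∃ q₀, A.I = {q₀}) ∧ ∀ q a, (A.δ q a).Subsingleton

end NrnrNFAwtl

/-- Language classes. -/
def NFAwtlLangs (α : Type) [Fintype α] : Set (Set (List α)) :=
  { L | ∃ (Q : Type) (_ : Fintype Q) (A : NFAwtl Q α), A.lang = L }

def DFAwtlLangs (α : Type) [Fintype α] : Set (Set (List α)) :=
  { L | ∃ (Q : Type) (_ : Fintype Q) (A : NFAwtl Q α), A.Deterministic ∧ A.lang = L }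

def RNFAwtlLangs (α : Type) [Fintype α] : Set (Set (List α)) :=
  { L | ∃ (Q : Type) (_ : Fintype Q) (A : RNFAwtl Q α), A.lang = L }

def RDFAwtlLangs (α : Type) [Fintype α] : Set (Set (List α)) :=
  { L | ∃ (Q : Type) (_ : Fintype Q) (A : RNFAwtl Q α), A.Deterministic ∧ A.lang = L }

def NrNFAwtlLangs (α : Type) [Fintype α] : Set (Set (List α)) :=
  { L | ∃ (Q : Type) (_ : Fintype Q) (A : NrNFAwtl Q α), A.lang = L }

def NrDFAwtlLangs (α : Type) [Fintype α] : Set (Set (List α)) :=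
  { L | ∃ (Q : Type) (_ : Fintype Q) (A : NrNFAwtl Q α), A.Deterministic ∧ A.lang = L }

def NrnrNFAwtlLangs (α : Type) [Fintype α] : Set (Set (List α)) :=
  { L | ∃ (Q : Type) (_ : Fintype Q) (A : NrnrNFAwtl Q α), A.lang = L }

def NrnrDFAwtlLangs (α : Type) [Fintype α] : Set (Set (List α)) :=
  { L | ∃ (Q : Type) (_ : Fintype Q) (A : NrnrNFAwtl Q α), A.Deterministic ∧ A.lang = L }

namespace NrnrNFAwtl

variable {Q α : Type}

/-- The simulating NFA. -/
def toNFA (A : NrnrNFAwtl Q α) : NFA α Q where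
  step := fun q a => {q' | (a ∈ A.τ q ∧ q' = q) ∨ q' ∈ A.δ q a}
  start := A.I
  accept := A.F

theorem step_pos (A : NrnrNFAwtl Q α) {q : Q} {a : α} (ha : a ∈ A.τ q) :
    A.toNFA.step q a = {q} := by
  ext r
  simp [toNFA, ha, A.tr q a ha]

theorem step_neg (A : NrnrNFAwtl Q α) {q : Q} {a : α} (ha : a ∉ A.τ q) :
    A.toNFA.step q a = A.δ q a := by
  ext r
  simp [toNFA, ha]

/-- Projection of the step relation forgetting the skipped prefix. -/
def R (A : NrnrNFAwtl Q α) : Q × List α → Q × List α → Prop := fun s t =>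
  ∃ u a, s.2 = u ++ a :: t.2 ∧ (∀ x ∈ u, x ∈ A.τ s.1) ∧ a ∉ A.τ s.1 ∧
    t.1 ∈ A.δ s.1 a

theorem step_to_R (A : NrnrNFAwtl Q α) {c c'} (h : A.Step c c') :
    A.R (c.2.1, c.2.2) (c'.2.1, c'.2.2) := by
  obtain ⟨u, a, v, h1, h2, h3, h4, h5, h6⟩ := h
  exact ⟨u, a, by simp [h1, h6], h2, h3, h4⟩

theorem rtg_step_to_R (A : NrnrNFAwtl Q α) {c c'} (h : Relation.ReflTransGen A.Step c c') :
    Relation.ReflTransGen A.R (c.2.1, c.2.2) (c'.2.1, c'.2.2) := by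
  induction h with
  | refl => exact .refl
  | tail _ h ih => exact ih.tail (A.step_to_R h)

theorem R_to_step_aux (A : NrnrNFAwtl Q α) {s t}
    (h : Relation.ReflTransGen A.R s t) :
    ∀ x, ∃ x', Relation.ReflTransGen A.Step (x, s.1, s.2) (x', t.1, t.2) := by
  induction h using Relation.ReflTransGen.head_induction_on with
  | refl => exact fun x => ⟨x, .refl⟩
  | head h _ ih =>
    rename_i s _
    obtain ⟨p₁, w₁⟩ := s
    obtain ⟨u, a, h1, h2, h3, h4⟩ := h
    intro x
    obtain ⟨x', hx'⟩ := ih (x ++ u)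
    exact ⟨x', .head ⟨u, a, w₁, h1, h2, h3, h4, rfl, rfl⟩ hx'⟩

theorem R_to_step (A : NrnrNFAwtl Q α) {p w q v}
    (h : Relation.ReflTransGen A.R (p, w) (q, v)) :
    ∀ x, ∃ x', Relation.ReflTransGen A.Step (x, p, w) (x', q, v) :=
  A.R_to_step_aux h

theorem mem_evalFrom_iff (A : NrnrNFAwtl Q α) (w : List α) :
    ∀ (S : Set Q) (q : Q), q ∈ A.toNFA.evalFrom S w ↔ ∃ p ∈ S, q ∈ A.toNFA.evalFrom {p} w := by
  induction w with
  | nil => simp [NFA.evalFrom]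
  | cons a w ih =>
    intro S q
    show q ∈ A.toNFA.evalFrom (A.toNFA.stepSet S a) w ↔
      ∃ p ∈ S, q ∈ A.toNFA.evalFrom (A.toNFA.stepSet {p} a) w
    rw [ih]
    constructor
    · rintro ⟨r, hr, hq⟩
      rw [NFA.mem_stepSet] at hr
      obtain ⟨p, hp, hr⟩ := hr
      exact ⟨p, hp, (ih _ _).2 ⟨r, by rw [NFA.mem_stepSet]; exact ⟨p, rfl, hr⟩, hq⟩⟩
    · rintro ⟨p, hp, hq⟩
      rw [ih] at hq
      obtain ⟨r, hr, hq⟩ := hq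
      rw [NFA.mem_stepSet] at hr
      obtain ⟨p', hp', hr⟩ := hr
      cases hp'
      exact ⟨r, by rw [NFA.mem_stepSet]; exact ⟨p, hp, hr⟩, hq⟩

theorem evalFrom_translucent (A : NrnrNFAwtl Q α) {q : Q} {v : List α}
    (hv : ∀ y ∈ v, y ∈ A.τ q) : A.toNFA.evalFrom {q} v = {q} := by
  induction v with
  | nil => rfl
  | cons a v ih =>
    have ha : a ∈ A.τ q := hv a (.head _)
    show A.toNFA.evalFrom (A.toNFA.stepSet {q} a) v = {q}
    have : A.toNFA.stepSet {q} a = {q} := by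
      ext r
      rw [NFA.mem_stepSet]
      simp [A.step_pos ha]
    rw [this]
    exact ih fun y hy => hv y (.tail _ hy)

theorem evalFrom_append' (A : NrnrNFAwtl Q α) (S : Set Q) (x y : List α) :
    A.toNFA.evalFrom S (x ++ y) = A.toNFA.evalFrom (A.toNFA.evalFrom S x) y :=
  List.foldl_append

theorem fwd_aux (A : NrnrNFAwtl Q α) {s t}
    (h : Relation.ReflTransGen A.R s t) :
    ∃ m, s.2 = m ++ t.2 ∧ t.1 ∈ A.toNFA.evalFrom {s.1} m := by
  induction h using Relation.ReflTransGen.head_induction_on with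
  | refl => exact ⟨[], rfl, rfl⟩
  | head h h' ih =>
    rename_i s₀ s₁
    obtain ⟨p, w⟩ := s₀
    obtain ⟨p₁, w₁⟩ := s₁
    obtain ⟨u, a, h1, h2, h3, h4⟩ := h
    obtain ⟨m, hm, hq⟩ := ih
    have h1' : w = u ++ a :: w₁ := h1
    have hm' : w₁ = m ++ t.2 := hm
    have hq' : t.1 ∈ A.toNFA.evalFrom {p₁} m := hq
    have h2' : ∀ x ∈ u, x ∈ A.τ p := h2
    have h3' : a ∉ A.τ p := h3
    have h4' : p₁ ∈ A.δ p a := h4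
    refine ⟨u ++ a :: m, by show w = _; rw [h1', hm']; simp, ?_⟩
    show t.1 ∈ A.toNFA.evalFrom {p} (u ++ a :: m)
    rw [show u ++ a :: m = u ++ ([a] ++ m) by simp, A.evalFrom_append',
      A.evalFrom_translucent h2', A.evalFrom_append']
    rw [A.mem_evalFrom_iff]
    refine ⟨p₁, ?_, hq'⟩
    show p₁ ∈ A.toNFA.evalFrom (A.toNFA.stepSet {p} a) []
    rw [NFA.evalFrom_nil, NFA.mem_stepSet]
    exact ⟨p, rfl, by rw [A.step_neg h3']; exact h4'⟩

theorem fwd (A : NrnrNFAwtl Q α) {p w q v}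
    (h : Relation.ReflTransGen A.R (p, w) (q, v)) :
    ∃ m, w = m ++ v ∧ q ∈ A.toNFA.evalFrom {p} m :=
  A.fwd_aux h

theorem bwd (A : NrnrNFAwtl Q α) (w : List α) :
    ∀ p q, q ∈ A.toNFA.evalFrom {p} w →
      ∃ v, Relation.ReflTransGen A.R (p, w) (q, v) ∧ ∀ y ∈ v, y ∈ A.τ q := by
  induction w with
  | nil =>
    intro p q hq
    rw [NFA.evalFrom_nil] at hq
    cases hq
    exact ⟨[], .refl, by simp⟩
  | cons a w ih =>
    intro p q hq
    replace hq : q ∈ A.toNFA.evalFrom (A.toNFA.stepSet {p} a) w := hq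
    rw [A.mem_evalFrom_iff] at hq
    obtain ⟨p', hp', hq⟩ := hq
    rw [NFA.mem_stepSet] at hp'
    obtain ⟨p'', hp'', hp'⟩ := hp'
    cases hp''
    by_cases ha : a ∈ A.τ p
    · rw [A.step_pos ha] at hp'
      cases hp'
      obtain ⟨v, hrun, hv⟩ := ih p q hq
      rcases hrun.cases_head with heq | ⟨⟨q₁, w₁⟩, hstep, hrest⟩
      · obtain ⟨rfl, rfl⟩ := Prod.ext_iff.mp heq
        exact ⟨a :: w, .refl, by
          intro y hy
          rcases hy with _ | hy
          · exact ha
          · exact hv y (by assumption)⟩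
      · obtain ⟨u, b, h1, h2, h3, h4⟩ := hstep
        refine ⟨v, .head ⟨a :: u, b, ?_, ?_, h3, h4⟩ hrest, hv⟩
        · simpa using h1
        · intro y hy
          rcases hy with _ | hy
          · exact ha
          · exact h2 y (by assumption)
    · rw [A.step_neg ha] at hp'
      obtain ⟨v, hrun, hv⟩ := ih p' q hq
      exact ⟨v, .head ⟨[], a, by simp, by simp, ha, hp'⟩ hrun, hv⟩

theorem toNFA_accepts (A : NrnrNFAwtl Q α) : A.toNFA.accepts = A.lang := by
  ext w
  rw [NFA.mem_accepts]
  constructor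
  · rintro ⟨q, hqF, hq⟩
    rw [A.mem_evalFrom_iff] at hq
    obtain ⟨q₀, hq₀, hq⟩ := hq
    obtain ⟨v, hrun, hv⟩ := A.bwd w q₀ q hq
    obtain ⟨x', hx'⟩ := A.R_to_step hrun []
    exact ⟨q₀, hq₀, x', q, v, hx', hv, hqF⟩
  · rintro ⟨q₀, hq₀, x, q, v, hrun, hv, hqF⟩
    have hR : Relation.ReflTransGen A.R (q₀, w) (q, v) := A.rtg_step_to_R hrun
    obtain ⟨m, hm, hq⟩ := A.fwd hR
    refine ⟨q, hqF, ?_⟩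
    rw [A.mem_evalFrom_iff]
    refine ⟨q₀, hq₀, ?_⟩
    rw [hm, A.evalFrom_append', A.mem_evalFrom_iff]
    refine ⟨q, hq, ?_⟩
    rw [A.evalFrom_translucent hv]
    rfl

end NrnrNFAwtl

/-- every nr-nr-NFAwtl is equivalent to an NFA; hence the class of
languages accepted by nr-nr-NFAwtls is exactly the class of regular languages. -/
theorem nrnrNFAwtl_equiv_NFA_and_regular (α : Type) [Fintype α] :
    (∀ (Q : Type) [Fintype Q] (A : NrnrNFAwtl Q α),
      ∃ (σ : Type) (_ : Fintype σ) (B : NFA α σ), B.accepts = A.lang) ∧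
    NrnrNFAwtlLangs α = { L : Set (List α) | Language.IsRegular (L : Language α) } := by
  constructor
  · intro Q _ A
    exact ⟨Q, inferInstance, A.toNFA, A.toNFA_accepts⟩
  · ext L
    constructor
    · rintro ⟨Q, _, A, rfl⟩
      refine ⟨Set Q, by classical exact inferInstance, A.toNFA.toDFA, ?_⟩
      rw [NFA.toDFA_correct, A.toNFA_accepts]
    · rintro ⟨σ, _, M, hM⟩
      classical
      obtain ⟨N, hN⟩ : ∃ N : NFA α σ, N.accepts = L := ⟨M.toNFA, by rw [M.toNFA_correct, hM]⟩
      obtain ⟨step, start, accept⟩ := N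
      let A : NrnrNFAwtl σ α := ⟨fun _ => ∅, start, accept, step, by simp⟩
      refine ⟨σ, inferInstance, A, ?_⟩
      have hs : (fun (q : σ) (a : α) => {q' | (a ∈ A.τ q ∧ q' = q) ∨ q' ∈ A.δ q a})
          = step := by
        funext q a
        ext r
        simp [A]
      have hT : A.toNFA = NFA.mk step start accept := by
        rw [show A.toNFA
            = NFA.mk (fun q a => {q' | (a ∈ A.τ q ∧ q' = q) ∨ q' ∈ A.δ q a}) start accept
            from rfl, hs]
      rw [← A.toNFA_accepts, hT, hN]
end

section
/- The class ℒ(RDFAwtl) is closed under complementation: for every RDFAwtl A over Σ there is an RDFAwtl B with L(B) = Σ* \ L(A). -/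
open Relation

section helpers
variable {α γ : Type}

lemma split_unique {T : Set α} : ∀ {u₁ u₂ : List α} {a₁ a₂ : α} {v₁ v₂ : List α},
    u₁ ++ a₁ :: v₁ = u₂ ++ a₂ :: v₂ → (∀ x ∈ u₁, x ∈ T) → a₁ ∉ T →
    (∀ x ∈ u₂, x ∈ T) → a₂ ∉ T → u₁ = u₂ ∧ a₁ = a₂ ∧ v₁ = v₂ := by
  intro u₁
  induction u₁ with
  | nil =>
    intro u₂ a₁ a₂ v₁ v₂ h h₁ n₁ h₂ n₂
    cases u₂ with
    | nil => simpa using h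
    | cons b t =>
      simp only [List.nil_append, List.cons_append, List.cons.injEq] at h
      exact absurd (h₂ b (by simp)) (h.1 ▸ n₁)
  | cons b t ih =>
    intro u₂ a₁ a₂ v₁ v₂ h h₁ n₁ h₂ n₂
    cases u₂ with
    | nil =>
      simp only [List.cons_append, List.nil_append, List.cons.injEq] at h
      exact absurd (h₁ b (by simp)) (h.1 ▸ n₂)
    | cons c t₂ =>
      simp only [List.cons_append, List.cons.injEq] at h
      obtain ⟨rfl, h⟩ := h
      obtain ⟨e₁, e₂, e₃⟩ := ih h (fun x hx => h₁ x (by simp [hx])) n₁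
        (fun x hx => h₂ x (by simp [hx])) n₂
      exact ⟨by rw [e₁], e₂, e₃⟩

lemma exists_split {T : Set α} : ∀ {u : List α}, (∃ x ∈ u, x ∉ T) →
    ∃ u₁ a v, u = u₁ ++ a :: v ∧ (∀ x ∈ u₁, x ∈ T) ∧ a ∉ T := by
  intro u
  induction u with
  | nil => simp
  | cons b t ih =>
    intro h
    by_cases hb : b ∈ T
    · obtain ⟨x, hx, hxT⟩ := h
      rcases List.mem_cons.mp hx with rfl | hx
      · exact absurd hb hxT
      · obtain ⟨u₁, a, v, rfl, h₁, h₂⟩ := ih ⟨x, hx, hxT⟩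
        refine ⟨b :: u₁, a, v, rfl, ?_, h₂⟩
        intro y hy
        rcases List.mem_cons.mp hy with rfl | hy
        · exact hb
        · exact h₁ y hy
    · exact ⟨[], b, t, rfl, by simp, hb⟩

lemma func_confluence {r : γ → γ → Prop} (hf : ∀ a b c, r a b → r a c → b = c)
    {c d₁ d₂ : γ} (h₁ : ReflTransGen r c d₁) (h₂ : ReflTransGen r c d₂) :
    ReflTransGen r d₁ d₂ ∨ ReflTransGen r d₂ d₁ := by
  induction h₂ with
  | refl => exact Or.inr h₁
  | @tail b d₂ hb hstep ih =>
    rcases ih with h | h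
    · exact Or.inl (h.tail hstep)
    · rcases h.cases_head with rfl | ⟨x, hx, hxd⟩
      · exact Or.inl (ReflTransGen.single hstep)
      · cases hf _ _ _ hstep hx
        exact Or.inr hxd

lemma no_cycle {r : γ → γ → Prop} (hf : ∀ a b c, r a b → r a c → b = c)
    {c d : γ} (h : ReflTransGen r c d) (hd : ∀ e, ¬ r d e) (hc : TransGen r c c) :
    False := by
  induction h using ReflTransGen.head_induction_on with
  | refl =>
    obtain ⟨e, he, _⟩ := (Relation.TransGen.head'_iff.mp hc)
    exact hd e he
  | @head b x hbx hxd ih =>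
    obtain ⟨e, he, hec⟩ := (Relation.TransGen.head'_iff.mp hc)
    cases hf _ _ _ hbx he
    exact ih (Relation.TransGen.tail' hec hbx)

end helpers

section construction

variable {Q α : Type}

open Classical in
/-- The complement automaton: simulates `A`, tracking the set of states at which
an end-of-tape transition was taken since the last deletion, with a sink state
`none` that accepts everything. -/
noncomputable def complAut (A : RNFAwtl Q α) (q₀ : Q) :
    RNFAwtl (Option (Q × Finset Q)) α where
  τ := fun s => s.elim Set.univ (fun p => A.τ p.1)
  I := {some (q₀, ∅)}
  δ := fun s a => s.elim ∅ (fun p =>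
    if a ∈ A.τ p.1 then ∅ else
    if A.δ p.1 a = ∅ then {none} else (fun q' => some (q', (∅ : Finset Q))) '' A.δ p.1 a)
  δend := fun s => s.elim ∅ (fun p =>
    if p.1 ∈ A.Facc then ∅ else
    if p.1 ∈ p.2 then {none} else
    if A.δend p.1 = ∅ then {none} else
    (fun q' => some (q', insert p.1 p.2)) '' A.δend p.1)
  Facc := {none}
  tr := by
    rintro (_ | ⟨q, S⟩) a ha
    · rfl
    · simp only [Option.elim_some] at ha ⊢
      rw [if_pos ha]
  accEnd := by
    rintro s hs
    cases hs
    rfl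

variable (A : RNFAwtl Q α) (q₀ : Q)

lemma complAut_τ_none : (complAut A q₀).τ none = Set.univ := rfl
lemma complAut_τ_some (q S) : (complAut A q₀).τ (some (q, S)) = A.τ q := rfl
open Classical in
lemma complAut_δ_some (q : Q) (S : Finset Q) (a : α) :
    (complAut A q₀).δ (some (q, S)) a =
    (if a ∈ A.τ q then ∅ else
    if A.δ q a = ∅ then {none} else (fun q' => some (q', (∅ : Finset Q))) '' A.δ q a) := by
  simp only [complAut, Option.elim_some]
open Classical in
lemma complAut_δend_some (q : Q) (S : Finset Q) :
    (complAut A q₀).δend (some (q, S)) =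
    (if q ∈ A.Facc then ∅ else
    if q ∈ S then {none} else
    if A.δend q = ∅ then {none} else
    (fun q' => some (q', insert q S)) '' A.δend q) := by
  simp only [complAut, Option.elim_some]

open Classical in
lemma complAut_det (hA : A.Deterministic) : (complAut A q₀).Deterministic := by
  obtain ⟨-, hδ, hδe⟩ := hA
  refine ⟨⟨some (q₀, ∅), rfl⟩, ?_, ?_⟩
  · rintro (_ | ⟨q, S⟩) a
    · exact Set.subsingleton_empty
    · rw [complAut_δ_some]
      split
      · exact Set.subsingleton_empty
      split
      · exact Set.subsingleton_singleton
      · exact (hδ q a).image _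
  · rintro (_ | ⟨q, S⟩)
    · exact Set.subsingleton_empty
    · rw [complAut_δend_some]
      split
      · exact Set.subsingleton_empty
      split
      · exact Set.subsingleton_singleton
      split
      · exact Set.subsingleton_singleton
      · exact (hδe q).image _

/-- Determinism of the step relation of a deterministic RNFAwtl. -/
lemma step_func (hA : A.Deterministic) :
    ∀ c c₁ c₂, A.Step c c₁ → A.Step c c₂ → c₁ = c₂ := by
  obtain ⟨-, hδ, hδe⟩ := hA
  rintro c c₁ c₂ (⟨u₁, a₁, v₁, e₁, t₁, n₁, m₁, r₁⟩ | ⟨t₁, m₁, r₁⟩)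
    (⟨u₂, a₂, v₂, e₂, t₂, n₂, m₂, r₂⟩ | ⟨t₂, m₂, r₂⟩)
  · obtain ⟨rfl, rfl, rfl⟩ := split_unique (e₁.symm.trans e₂) t₁ n₁ t₂ n₂
    exact Prod.ext (hδ _ _ m₁ m₂) (r₁.trans r₂.symm)
  · exact absurd (t₂ a₁ (e₁ ▸ by simp)) n₁
  · exact absurd (t₁ a₂ (e₂ ▸ by simp)) n₂
  · exact Prod.ext (hδe _ m₁ m₂) (r₁.trans r₂.symm)

/-- Accepting configurations are terminal. -/
lemma acc_terminal {c : Q × List α} (ht : ∀ x ∈ c.2, x ∈ A.τ c.1)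
    (hF : c.1 ∈ A.Facc) : ∀ c', ¬ A.Step c c' := by
  rintro c' (⟨u, a, v, e, t, n, m, r⟩ | ⟨t, m, r⟩)
  · exact n (ht a (e ▸ by simp))
  · rw [A.accEnd _ hF] at m
    exact m

end construction


/-- ℒ(RDFAwtl) is closed under complementation. -/
theorem RDFAwtl_closed_complement (α : Type) [Fintype α] (Q : Type) [Fintype Q]
    (A : RNFAwtl Q α) (hA : A.Deterministic) :
    ∃ (Q' : Type) (_ : Fintype Q') (B : RNFAwtl Q' α),
      B.Deterministic ∧ B.lang = A.langᶜ := by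
  classical
  obtain ⟨⟨q₀, hI⟩, hδ, hδe⟩ := hA
  have hA' : A.Deterministic := ⟨⟨q₀, hI⟩, hδ, hδe⟩
  set B := complAut A q₀ with hBdef
  refine ⟨Option (Q × Finset Q), inferInstance, B, complAut_det A q₀ hA', ?_⟩
  have hf := step_func A hA'
  ext w
  simp only [RNFAwtl.lang, Set.mem_setOf_eq, Set.mem_compl_iff]
  constructor
  · -- B accepts implies A does not accept
    rintro ⟨p₀, hp₀, p, v, hrun, -, hpF⟩ ⟨r₀, hr₀, qf, wf, harun, htf, hFf⟩
    have hr₀' : r₀ = q₀ := by rw [hI] at hr₀; exact hr₀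
    rw [hr₀'] at harun
    rw [show p₀ = some (q₀, ∅) from hp₀] at hrun
    rw [show p = none from hpF] at hrun
    have htermf : ∀ c', ¬ A.Step (qf, wf) c' := acc_terminal A htf hFf
    have K : ∀ d, Relation.ReflTransGen B.Step (some (q₀, (∅ : Finset Q)), w) d →
        ∃ q S, d.1 = some (q, S) ∧ Relation.ReflTransGen A.Step (q₀, w) (q, d.2) ∧
          ∀ p' ∈ S, Relation.TransGen A.Step (p', d.2) (q, d.2) := by
      intro d hd
      induction hd with
      | refl => exact ⟨q₀, ∅, rfl, Relation.ReflTransGen.refl, by simp⟩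
      | @tail b d hb hstep ih =>
        obtain ⟨b1, b2⟩ := b
        obtain ⟨d1, d2⟩ := d
        obtain ⟨q, S, hb1, hrA₀, hinv₀⟩ := ih
        simp only at hb1
        subst hb1
        have hrA : Relation.ReflTransGen A.Step (q₀, w) (q, b2) := hrA₀
        have hinv : ∀ p' ∈ S, Relation.TransGen A.Step (p', b2) (q, b2) := hinv₀
        rcases hstep with ⟨u, a, v', e, t, n, m, r⟩ | ⟨t, m, r⟩
        · -- letter step of B
          simp only at e t n m r
          have t' : ∀ x ∈ u, x ∈ A.τ q := t
          have n' : a ∉ A.τ q := n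
          rw [complAut_δ_some, if_neg n'] at m
          by_cases hdel : A.δ q a = ∅
          · rw [if_pos hdel] at m
            exfalso
            have hterm : ∀ c', ¬ A.Step (q, b2) c' := by
              rintro c' (⟨u₂, a₂, v₂, e₂, t₂, n₂, m₂, r₂⟩ | ⟨t₂, m₂, r₂⟩)
              · obtain ⟨rfl, rfl, rfl⟩ := split_unique (e.symm.trans e₂) t' n' t₂ n₂
                rw [hdel] at m₂
                exact m₂
              · exact n' (t₂ a (by rw [e]; simp))
            rcases func_confluence hf hrA harun with h | h
            · rcases h.cases_head with heq | ⟨x, hx, -⟩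
              · have : b2 = wf := congrArg Prod.snd heq
                have hq : q = qf := congrArg Prod.fst heq
                exact n' (hq ▸ (this ▸ htf) a (by rw [e]; simp))
              · exact hterm _ hx
            · rcases h.cases_head with heq | ⟨x, hx, -⟩
              · have : wf = b2 := congrArg Prod.snd heq
                have hq : qf = q := congrArg Prod.fst heq
                exact n' (hq ▸ htf a (by rw [← this] at e; rw [e]; simp))
              · exact htermf _ hx
          · rw [if_neg hdel] at m
            obtain ⟨q'', hq'', hm⟩ := m
            exact ⟨q'', ∅, hm.symm,
              hrA.tail (Or.inl ⟨u, a, v', e, t', n', hq'', r⟩), by simp⟩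
        · -- end step of B
          simp only at t m r
          have t' : ∀ x ∈ b2, x ∈ A.τ q := t
          rw [complAut_δend_some] at m
          by_cases hF : q ∈ A.Facc
          · rw [if_pos hF] at m
            exact absurd m (by simp)
          rw [if_neg hF] at m
          by_cases hS : q ∈ S
          · rw [if_pos hS] at m
            exfalso
            have hcyc := hinv q hS
            rcases func_confluence hf hrA harun with h | h
            · exact no_cycle hf h htermf hcyc
            · rcases h.cases_head with heq | ⟨x, hx, -⟩
              · exact no_cycle hf Relation.ReflTransGen.refl htermf (heq ▸ hcyc)
              · exact htermf _ hx
          rw [if_neg hS] at m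
          by_cases he : A.δend q = ∅
          · rw [if_pos he] at m
            exfalso
            have hterm : ∀ c', ¬ A.Step (q, b2) c' := by
              rintro c' (⟨u₂, a₂, v₂, e₂, t₂, n₂, m₂, r₂⟩ | ⟨t₂, m₂, r₂⟩)
              · exact n₂ (t' a₂ (by rw [show b2 = u₂ ++ a₂ :: v₂ from e₂]; simp))
              · rw [he] at m₂
                exact m₂
            rcases func_confluence hf hrA harun with h | h
            · rcases h.cases_head with heq | ⟨x, hx, -⟩
              · exact hF ((show q = qf from congrArg Prod.fst heq) ▸ hFf)
              · exact hterm _ hx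
            · rcases h.cases_head with heq | ⟨x, hx, -⟩
              · exact hF ((show qf = q from congrArg Prod.fst heq) ▸ hFf)
              · exact htermf _ hx
          · rw [if_neg he] at m
            obtain ⟨q', hq', hm⟩ := m
            refine ⟨q', insert q S, hm.symm, ?_, ?_⟩
            · rw [show d2 = b2 from r]
              exact hrA.tail (Or.inr ⟨t', hq', rfl⟩)
            · intro p' hp'
              rw [show d2 = b2 from r]
              rcases Finset.mem_insert.mp hp' with rfl | hp'
              · exact Relation.TransGen.single (Or.inr ⟨t', hq', rfl⟩)
              · exact (hinv p' hp').tail (Or.inr ⟨t', hq', rfl⟩)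
    obtain ⟨q, S, hcontra, -, -⟩ := K (none, v) hrun
    exact Option.some_ne_none _ (show (none : Option (Q × Finset Q)) = some (q, S) from hcontra).symm
  · -- A does not accept implies B accepts
    intro hnA
    have hno : ∀ d, Relation.ReflTransGen A.Step (q₀, w) d →
        ¬ ((∀ x ∈ d.2, x ∈ A.τ d.1) ∧ d.1 ∈ A.Facc) := by
      intro d hd hacc
      exact hnA ⟨q₀, by rw [hI]; rfl, d.1, d.2, hd, hacc.1, hacc.2⟩
    set c := Fintype.card Q with hc
    have R : ∀ n (q : Q) (S : Finset Q) (u : List α),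
        u.length * (c + 1) + (c - S.card) ≤ n →
        (∀ d, Relation.ReflTransGen A.Step (q, u) d →
          ¬ ((∀ x ∈ d.2, x ∈ A.τ d.1) ∧ d.1 ∈ A.Facc)) →
        ∃ v, Relation.ReflTransGen B.Step (some (q, S), u) (none, v) := by
      intro n
      induction n using Nat.strong_induction_on with
      | _ n ih =>
        intro q S u hμ hno
        by_cases ht : ∀ x ∈ u, x ∈ A.τ q
        · by_cases hF : q ∈ A.Facc
          · exact absurd ⟨ht, hF⟩ (hno (q, u) Relation.ReflTransGen.refl)
          by_cases hS : q ∈ S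
          · refine ⟨u, Relation.ReflTransGen.single (Or.inr ⟨ht, ?_, rfl⟩)⟩
            rw [complAut_δend_some, if_neg hF, if_pos hS]
            rfl
          by_cases he : A.δend q = ∅
          · refine ⟨u, Relation.ReflTransGen.single (Or.inr ⟨ht, ?_, rfl⟩)⟩
            rw [complAut_δend_some, if_neg hF, if_neg hS, if_pos he]
            rfl
          · obtain ⟨q', hq'⟩ := Set.nonempty_iff_ne_empty.mpr he
            have hstepB : B.Step (some (q, S), u) (some (q', insert q S), u) := by
              refine Or.inr ⟨ht, ?_, rfl⟩
              rw [complAut_δend_some, if_neg hF, if_neg hS, if_neg he]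
              exact ⟨q', hq', rfl⟩
            have hci := Finset.card_insert_of_notMem hS
            have hcu : (insert q S).card ≤ c := Finset.card_le_univ _
            obtain ⟨v, hv⟩ := ih (u.length * (c + 1) + (c - (insert q S).card))
              (by omega) q' (insert q S) u le_rfl
              (fun d hd => hno d (Relation.ReflTransGen.head
                (show A.Step (q, u) (q', u) from Or.inr ⟨ht, hq', rfl⟩) hd))
            exact ⟨v, Relation.ReflTransGen.head hstepB hv⟩
        · push_neg at ht
          obtain ⟨u₁, a, v', e, t₁, n₁⟩ := exists_split ⟨ht.choose, ht.choose_spec.1, ht.choose_spec.2⟩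
          by_cases hdel : A.δ q a = ∅
          · refine ⟨u₁ ++ v',
              Relation.ReflTransGen.single (Or.inl ⟨u₁, a, v', e, t₁, n₁, ?_, ?_⟩)⟩
            · rw [complAut_δ_some, if_neg n₁, if_pos hdel]
              rfl
            · rfl
          · obtain ⟨q', hq'⟩ := Set.nonempty_iff_ne_empty.mpr hdel
            have hstepA : A.Step (q, u) (q', u₁ ++ v') :=
              Or.inl ⟨u₁, a, v', e, t₁, n₁, hq', rfl⟩
            have hstepB : B.Step (some (q, S), u) (some (q', (∅ : Finset Q)), u₁ ++ v') := by
              refine Or.inl ⟨u₁, a, v', e, t₁, n₁, ?_, rfl⟩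
              rw [complAut_δ_some, if_neg n₁, if_neg hdel]
              exact ⟨q', hq', rfl⟩
            have hlen : u.length = (u₁ ++ v').length + 1 := by
              rw [e]; simp only [List.length_append, List.length_cons]; omega
            have hmul : u.length * (c + 1) = (u₁ ++ v').length * (c + 1) + (c + 1) := by
              rw [hlen]; ring
            obtain ⟨v, hv⟩ := ih ((u₁ ++ v').length * (c + 1) + c)
              (by omega) q' ∅ (u₁ ++ v') (by simp)
              (fun d hd => hno d (Relation.ReflTransGen.head hstepA hd))
            exact ⟨v, Relation.ReflTransGen.head hstepB hv⟩
    obtain ⟨v, hv⟩ := R (w.length * (c + 1) + c) q₀ ∅ w (by simp) hno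
    exact ⟨some (q₀, ∅), rfl, none, v, hv, fun x _ => trivial, rfl⟩
end

section
/- From every RDFAwtl A one can effectively construct an equivalent RDFAwtl B such that in the first step of each computation, B reads and deletes the very first letter of the given input. -/
namespace RF

open RNFAwtl

variable {Q α : Type}

/-- Where `B` goes when `A`, with pending deleted letter `a`, lands in state `q'`:
if `a` is still translucent for `q'`, keep it pending; otherwise `A` immediately
deletes `a`, so compose with `A.δ q' a`. -/
def after (A : RNFAwtl Q α) (a : α) (q' : Q) : Set (Unit ⊕ Q ⊕ Q × α) :=
  { s | (a ∈ A.τ q' ∧ s = Sum.inr (Sum.inr (q', a))) ∨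
        (a ∉ A.τ q' ∧ ∃ q'', q'' ∈ A.δ q' a ∧ s = Sum.inr (Sum.inl q'')) }

/-- The automaton `B`: it deletes the first input letter in its first step. -/
def B (A : RNFAwtl Q α) (q₀ : Q) : RNFAwtl (Unit ⊕ Q ⊕ Q × α) α where
  τ := fun s => match s with
    | Sum.inl _ => ∅
    | Sum.inr (Sum.inl q) => A.τ q
    | Sum.inr (Sum.inr (q, _)) => A.τ q
  I := {Sum.inl ()}
  δ := fun s b => match s with
    | Sum.inl _ => after A b q₀
    | Sum.inr (Sum.inl q) => (Sum.inr ∘ Sum.inl) '' A.δ q b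
    | Sum.inr (Sum.inr (q, a)) => { s' | ∃ q', q' ∈ A.δ q b ∧ s' ∈ after A a q' }
  δend := fun s => match s with
    | Sum.inl _ => (Sum.inr ∘ Sum.inl) '' A.δend q₀
    | Sum.inr (Sum.inl q) => (Sum.inr ∘ Sum.inl) '' A.δend q
    | Sum.inr (Sum.inr (q, a)) => { s' | ∃ q', q' ∈ A.δend q ∧ s' ∈ after A a q' }
  Facc := fun s => match s with
    | Sum.inl _ => q₀ ∈ A.Facc
    | Sum.inr (Sum.inl q) => q ∈ A.Facc
    | Sum.inr (Sum.inr (q, a)) => a ∈ A.τ q ∧ q ∈ A.Facc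
  tr := by
    rintro (u | q | ⟨q, a⟩) b hb
    · exact absurd hb (Set.notMem_empty _)
    · show (Sum.inr ∘ Sum.inl) '' A.δ q b = ∅
      rw [A.tr q b hb, Set.image_empty]
    · show { s' | ∃ q', q' ∈ A.δ q b ∧ s' ∈ after A a q' } = ∅
      have := A.tr q b hb
      ext s; simp [this]
  accEnd := by
    rintro (u | q | ⟨q, a⟩) hq
    · show (Sum.inr ∘ Sum.inl) '' A.δend q₀ = ∅
      rw [A.accEnd _ hq, Set.image_empty]
    · show (Sum.inr ∘ Sum.inl) '' A.δend q = ∅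
      rw [A.accEnd _ hq, Set.image_empty]
    · show { s' | ∃ q', q' ∈ A.δend q ∧ s' ∈ after A a q' } = ∅
      have := A.accEnd _ hq.2
      ext s; simp [this]

/-- Acceptance from a given configuration. -/
def AccFrom {S : Type} (A : RNFAwtl S α) (c : S × List α) : Prop :=
  ∃ q w', Relation.ReflTransGen A.Step c (q, w') ∧ (∀ x ∈ w', x ∈ A.τ q) ∧ q ∈ A.Facc

/-- Acceptance in exactly `n` steps. -/
def AccN {S : Type} (A : RNFAwtl S α) : ℕ → S × List α → Prop
  | 0, c => (∀ x ∈ c.2, x ∈ A.τ c.1) ∧ c.1 ∈ A.Facc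
  | n + 1, c => ∃ c', A.Step c c' ∧ AccN A n c'

lemma accN_zero {S : Type} {A : RNFAwtl S α} {c} :
    AccN A 0 c ↔ (∀ x ∈ c.2, x ∈ A.τ c.1) ∧ c.1 ∈ A.Facc := Iff.rfl

lemma accN_succ {S : Type} {A : RNFAwtl S α} {n c} :
    AccN A (n + 1) c ↔ ∃ c', A.Step c c' ∧ AccN A n c' := Iff.rfl

lemma accFrom_of {S : Type} (A : RNFAwtl S α) {q t}
    (h1 : ∀ x ∈ t, x ∈ A.τ q) (h2 : q ∈ A.Facc) : AccFrom A (q, t) :=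
  ⟨q, t, Relation.ReflTransGen.refl, h1, h2⟩

lemma accFrom_head {S : Type} {A : RNFAwtl S α} {c c'}
    (h : A.Step c c') (h2 : AccFrom A c') : AccFrom A c := by
  obtain ⟨q, w', r, hw, hf⟩ := h2
  exact ⟨q, w', r.head h, hw, hf⟩

lemma accFrom_to_accN {S : Type} {A : RNFAwtl S α} {c} (h : AccFrom A c) :
    ∃ n, AccN A n c := by
  obtain ⟨q, w', r, hw, hf⟩ := h
  induction r using Relation.ReflTransGen.head_induction_on with
  | refl => exact ⟨0, hw, hf⟩
  | head h _ ih => obtain ⟨n, hn⟩ := ih; exact ⟨n + 1, _, h, hn⟩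

lemma accN_to_accFrom {S : Type} {A : RNFAwtl S α} :
    ∀ {n c}, AccN A n c → AccFrom A c := by
  intro n
  induction n with
  | zero => intro c h; exact ⟨c.1, c.2, Relation.ReflTransGen.refl, h.1, h.2⟩
  | succ n ih => rintro c ⟨c', hs, h⟩; exact accFrom_head hs (ih h)

/-- If the head letter is non-translucent, any step must delete it. -/
lemma step_head {A : RNFAwtl Q α} {q : Q} {a : α} {t : List α} {c'}
    (ha : a ∉ A.τ q) (h : A.Step (q, a :: t) c') :
    ∃ q', q' ∈ A.δ q a ∧ c' = (q', t) := by
  rcases h with ⟨u, b, v, he, hu, hb, hq', ht⟩ | ⟨hall, _, _⟩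
  · cases u with
    | nil =>
      simp only [List.nil_append, List.cons.injEq] at he
      obtain ⟨h1, h2⟩ := he
      subst h1; subst h2
      refine ⟨c'.1, hq', ?_⟩
      simp only [List.nil_append] at ht
      exact Prod.ext rfl ht
    | cons x u' =>
      simp only [List.cons_append, List.cons.injEq] at he
      exact absurd (he.1 ▸ hu x (List.mem_cons_self)) ha
  · exact absurd (hall a (List.mem_cons_self)) ha

/-- Simulation relation between `B`-configurations and `A`-configurations. -/
def sim (A : RNFAwtl Q α) (q₀ : Q) :
    (Unit ⊕ Q ⊕ Q × α) × List α → Q × List α → Prop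
  | (Sum.inl _, t), (q, t') => q = q₀ ∧ t' = t
  | (Sum.inr (Sum.inl p), t), (q, t') => p = q ∧ t' = t
  | (Sum.inr (Sum.inr (p, a)), t), (q, t') => p = q ∧ t' = a :: t ∧ a ∈ A.τ q

/-- Soundness: an accepting `B`-computation yields an accepting `A`-computation. -/
lemma B_to_A (A : RNFAwtl Q α) (q₀ : Q) :
    ∀ cB, AccFrom (B A q₀) cB → ∀ cA, sim A q₀ cB cA → AccFrom A cA := by
  rintro cB ⟨qf, w', r, hw, hf⟩
  induction r using Relation.ReflTransGen.head_induction_on with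
  | refl =>
    rintro ⟨q, t'⟩ hsim
    rcases qf with u | p | ⟨p, a⟩
    · obtain ⟨rfl, rfl⟩ := hsim
      exact accFrom_of A (fun x hx => absurd (hw x hx) (Set.notMem_empty x)) hf
    · obtain ⟨rfl, rfl⟩ := hsim
      exact accFrom_of A hw hf
    · obtain ⟨rfl, rfl, ha⟩ := hsim
      refine accFrom_of A ?_ hf.2
      intro x hx
      rcases List.mem_cons.mp hx with rfl | hx
      · exact ha
      · exact hw x hx
  | @head c₁ c₂ hstep hrest ih =>
    obtain ⟨s₁, t₁⟩ := c₁
    obtain ⟨s₂, t₂⟩ := c₂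
    rintro ⟨q, t'⟩ hsim
    rcases s₁ with u | p | ⟨p, a⟩
    · -- new initial state
      obtain ⟨hq, htt⟩ := hsim
      rw [hq, htt]
      rcases hstep with ⟨u', b, v, he, hu, hb, hs, ht⟩ | ⟨hall, hs, ht⟩
      · have hu0 : u' = [] := by
          cases u' with
          | nil => rfl
          | cons x xs => exact absurd (hu x (List.mem_cons_self)) (Set.notMem_empty x)
        subst hu0
        have he' : t₁ = b :: v := he
        have ht' : t₂ = v := by
          have : t₂ = [] ++ v := ht
          simpa using this
        rcases hs with ⟨hbt, rfl⟩ | ⟨hbn, q', hq', rfl⟩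
        · exact ih (q₀, t₁) ⟨rfl, by rw [he', ht'], hbt⟩
        · have step : A.Step (q₀, t₁) (q', v) :=
            Or.inl ⟨[], b, v, he', by simp, hbn, hq', by simp⟩
          exact accFrom_head step (ih (q', v) ⟨rfl, ht'.symm⟩)
      · obtain ⟨q', hq', rfl⟩ := hs
        have ht' : t₂ = t₁ := ht
        have step : A.Step (q₀, t₁) (q', t₁) :=
          Or.inr ⟨fun x hx => absurd (hall x hx) (Set.notMem_empty x), hq', rfl⟩
        exact accFrom_head step (ih (q', t₁) ⟨rfl, ht'.symm⟩)
    · -- copy of an `A`-state: mirror the step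
      obtain ⟨hq, htt⟩ := hsim
      rw [← hq, htt]
      rcases hstep with ⟨u', b, v, he, hu, hb, hs, ht⟩ | ⟨hall, hs, ht⟩
      · obtain ⟨q', hq', rfl⟩ := hs
        have ht' : t₂ = u' ++ v := ht
        have step : A.Step (p, t₁) (q', u' ++ v) :=
          Or.inl ⟨u', b, v, he, hu, hb, hq', rfl⟩
        exact accFrom_head step (ih (q', u' ++ v) ⟨rfl, ht'.symm⟩)
      · obtain ⟨q', hq', rfl⟩ := hs
        have ht' : t₂ = t₁ := ht
        have step : A.Step (p, t₁) (q', t₁) := Or.inr ⟨hall, hq', rfl⟩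
        exact accFrom_head step (ih (q', t₁) ⟨rfl, ht'.symm⟩)
    · -- pending state
      obtain ⟨hq, htt, haτ⟩ := hsim
      rw [← hq] at haτ
      rw [← hq, htt]
      rcases hstep with ⟨u', b, v, he, hu, hb, hs, ht⟩ | ⟨hall, hs, ht⟩
      · obtain ⟨q₁, hq₁, hafter⟩ := hs
        have he' : t₁ = u' ++ b :: v := he
        have step1 : A.Step (p, a :: t₁) (q₁, a :: (u' ++ v)) :=
          Or.inl ⟨a :: u', b, v, by simp [he'], by
            intro x hx
            rcases List.mem_cons.mp hx with rfl | hx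
            · exact haτ
            · exact hu x hx, hb, hq₁, rfl⟩
        rcases hafter with ⟨hat, rfl⟩ | ⟨han, q'', hq'', rfl⟩
        · have ht' : t₂ = u' ++ v := ht
          exact accFrom_head step1 (ih (q₁, a :: (u' ++ v)) ⟨rfl, by rw [ht'], hat⟩)
        · have ht' : t₂ = u' ++ v := ht
          have step2 : A.Step (q₁, a :: (u' ++ v)) (q'', u' ++ v) :=
            Or.inl ⟨[], a, u' ++ v, by simp, by simp, han, hq'', by simp⟩
          exact accFrom_head step1 (accFrom_head step2 (ih (q'', u' ++ v) ⟨rfl, ht'.symm⟩))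
      · obtain ⟨q₁, hq₁, hafter⟩ := hs
        have step1 : A.Step (p, a :: t₁) (q₁, a :: t₁) :=
          Or.inr ⟨by
            intro x hx
            rcases List.mem_cons.mp hx with rfl | hx
            · exact haτ
            · exact hall x hx, hq₁, rfl⟩
        rcases hafter with ⟨hat, rfl⟩ | ⟨han, q'', hq'', rfl⟩
        · have ht' : t₂ = t₁ := ht
          exact accFrom_head step1 (ih (q₁, a :: t₁) ⟨rfl, by rw [ht'], hat⟩)
        · have ht' : t₂ = t₁ := ht
          have step2 : A.Step (q₁, a :: t₁) (q'', t₁) :=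
            Or.inl ⟨[], a, t₁, by simp, by simp, han, hq'', by simp⟩
          exact accFrom_head step1 (accFrom_head step2 (ih (q'', t₁) ⟨rfl, ht'.symm⟩))

/-- Completeness, for non-initial states of `B`, by strong induction on the
length of `A`'s accepting run. -/
lemma A_to_B_stable (A : RNFAwtl Q α) (q₀ : Q) : ∀ n : ℕ,
    (∀ q t, AccN A n (q, t) → AccFrom (B A q₀) (Sum.inr (Sum.inl q), t)) ∧
    (∀ q a t, a ∈ A.τ q → AccN A n (q, a :: t) →
      AccFrom (B A q₀) (Sum.inr (Sum.inr (q, a)), t)) := by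
  intro n
  induction n using Nat.strong_induction_on with
  | _ n ih =>
    constructor
    · intro q t hacc
      cases n with
      | zero => exact accFrom_of (B A q₀) hacc.1 hacc.2
      | succ m =>
        rw [accN_succ] at hacc
        obtain ⟨⟨q', t'⟩, hstep, hm⟩ := hacc
        rcases hstep with ⟨u, b, v, he, hu, hb, hq', ht⟩ | ⟨hall, hq', ht⟩
        · have he' : t = u ++ b :: v := he
          have ht' : t' = u ++ v := ht
          have step : (B A q₀).Step (Sum.inr (Sum.inl q), t) (Sum.inr (Sum.inl q'), u ++ v) :=
            Or.inl ⟨u, b, v, he', hu, hb, ⟨q', hq', rfl⟩, rfl⟩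
          refine accFrom_head step ((ih m (Nat.lt_succ_self m)).1 q' (u ++ v) ?_)
          rw [← ht']; exact hm
        · have ht' : t' = t := ht
          have step : (B A q₀).Step (Sum.inr (Sum.inl q), t) (Sum.inr (Sum.inl q'), t) :=
            Or.inr ⟨hall, ⟨q', hq', rfl⟩, rfl⟩
          refine accFrom_head step ((ih m (Nat.lt_succ_self m)).1 q' t ?_)
          rw [← ht']; exact hm
    · intro q a t haτ hacc
      cases n with
      | zero =>
        exact accFrom_of (B A q₀) (fun x hx => hacc.1 x (List.mem_cons_of_mem a hx))
          ⟨haτ, hacc.2⟩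
      | succ m =>
        rw [accN_succ] at hacc
        obtain ⟨⟨q₁, t₁⟩, hstep, hm⟩ := hacc
        rcases hstep with ⟨u, b, v, he, hu, hb, hq₁, ht⟩ | ⟨hall, hq₁, ht⟩
        · have he' : a :: t = u ++ b :: v := he
          have ht' : t₁ = u ++ v := ht
          cases u with
          | nil =>
            simp only [List.nil_append, List.cons.injEq] at he'
            exact absurd (he'.1 ▸ haτ) hb
          | cons x u =>
            simp only [List.cons_append, List.cons.injEq] at he'
            obtain ⟨hxa, hts⟩ := he'
            subst hxa
            have hb' : b ∉ A.τ q := hb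
            have hu' : ∀ y ∈ u, y ∈ A.τ q := fun y hy => hu y (List.mem_cons_of_mem a hy)
            have hm' : AccN A m (q₁, a :: (u ++ v)) := by
              have h2 : t₁ = a :: (u ++ v) := by simpa using ht'
              rw [h2] at hm; exact hm
            by_cases hcase : a ∈ A.τ q₁
            · have step : (B A q₀).Step (Sum.inr (Sum.inr (q, a)), t)
                  (Sum.inr (Sum.inr (q₁, a)), u ++ v) :=
                Or.inl ⟨u, b, v, hts, hu', hb', ⟨q₁, hq₁, Or.inl ⟨hcase, rfl⟩⟩, rfl⟩
              exact accFrom_head step ((ih m (Nat.lt_succ_self m)).2 q₁ a (u ++ v) hcase hm')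
            · cases m with
              | zero => exact absurd (hm'.1 a (List.mem_cons_self)) hcase
              | succ k =>
                rw [accN_succ] at hm'
                obtain ⟨c'', hstep2, hk⟩ := hm'
                obtain ⟨q'', hq'', rfl⟩ := step_head hcase hstep2
                have step : (B A q₀).Step (Sum.inr (Sum.inr (q, a)), t)
                    (Sum.inr (Sum.inl q''), u ++ v) :=
                  Or.inl ⟨u, b, v, hts, hu', hb',
                    ⟨q₁, hq₁, Or.inr ⟨hcase, q'', hq'', rfl⟩⟩, rfl⟩
                exact accFrom_head step ((ih k (by omega)).1 q'' (u ++ v) hk)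
        · have ht' : t₁ = a :: t := ht
          have hall' : ∀ y ∈ t, y ∈ A.τ q := fun y hy => hall y (List.mem_cons_of_mem a hy)
          have hm' : AccN A m (q₁, a :: t) := by rw [ht'] at hm; exact hm
          by_cases hcase : a ∈ A.τ q₁
          · have step : (B A q₀).Step (Sum.inr (Sum.inr (q, a)), t)
                (Sum.inr (Sum.inr (q₁, a)), t) :=
              Or.inr ⟨hall', ⟨q₁, hq₁, Or.inl ⟨hcase, rfl⟩⟩, rfl⟩
            exact accFrom_head step ((ih m (Nat.lt_succ_self m)).2 q₁ a t hcase hm')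
          · cases m with
            | zero => exact absurd (hm'.1 a (List.mem_cons_self)) hcase
            | succ k =>
              rw [accN_succ] at hm'
              obtain ⟨c'', hstep2, hk⟩ := hm'
              obtain ⟨q'', hq'', rfl⟩ := step_head hcase hstep2
              have step : (B A q₀).Step (Sum.inr (Sum.inr (q, a)), t)
                  (Sum.inr (Sum.inl q''), t) :=
                Or.inr ⟨hall', ⟨q₁, hq₁, Or.inr ⟨hcase, q'', hq'', rfl⟩⟩, rfl⟩
              exact accFrom_head step ((ih k (by omega)).1 q'' t hk)

/-- Completeness from the initial configuration. -/
lemma A_to_B (A : RNFAwtl Q α) (q₀ : Q) :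
    ∀ n w, AccN A n (q₀, w) → AccFrom (B A q₀) (Sum.inl (), w) := by
  intro n w hn
  cases w with
  | nil =>
    cases n with
    | zero => exact accFrom_of (B A q₀) (by simp) hn.2
    | succ m =>
      rw [accN_succ] at hn
      obtain ⟨⟨q₁, t₁⟩, hstep, hm⟩ := hn
      rcases hstep with ⟨u, b, v, he, hu, hb, hq₁, ht⟩ | ⟨hall, hq₁, ht⟩
      · exact absurd (he : ([] : List α) = u ++ b :: v) (by simp)
      · have ht' : t₁ = [] := ht
        have step : (B A q₀).Step (Sum.inl (), ([] : List α)) (Sum.inr (Sum.inl q₁), []) :=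
          Or.inr ⟨by simp, ⟨q₁, hq₁, rfl⟩, rfl⟩
        refine accFrom_head step ((A_to_B_stable A q₀ m).1 q₁ [] ?_)
        rw [← ht']; exact hm
  | cons a v =>
    by_cases hcase : a ∈ A.τ q₀
    · have step : (B A q₀).Step (Sum.inl (), a :: v) (Sum.inr (Sum.inr (q₀, a)), v) :=
        Or.inl ⟨[], a, v, rfl, by simp, Set.notMem_empty a, Or.inl ⟨hcase, rfl⟩, by simp⟩
      exact accFrom_head step ((A_to_B_stable A q₀ n).2 q₀ a v hcase hn)
    · cases n with
      | zero => exact absurd (hn.1 a (List.mem_cons_self)) hcase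
      | succ m =>
        rw [accN_succ] at hn
        obtain ⟨c', hstep, hm⟩ := hn
        obtain ⟨q₁, hq₁, rfl⟩ := step_head hcase hstep
        have step : (B A q₀).Step (Sum.inl (), a :: v) (Sum.inr (Sum.inl q₁), v) :=
          Or.inl ⟨[], a, v, rfl, by simp, Set.notMem_empty a,
            Or.inr ⟨hcase, q₁, hq₁, rfl⟩, by simp⟩
        exact accFrom_head step ((A_to_B_stable A q₀ m).1 q₁ v hm)

lemma after_subsingleton {A : RNFAwtl Q α} (hd : ∀ q a, (A.δ q a).Subsingleton)
    (a : α) (q' : Q) : (after A a q').Subsingleton := by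
  rintro s₁ (⟨ht, rfl⟩ | ⟨hn, q₁, hq₁, rfl⟩) s₂ (⟨ht2, rfl⟩ | ⟨hn2, q₂, hq₂, rfl⟩)
  · rfl
  · exact absurd ht hn2
  · exact absurd ht2 hn
  · rw [hd _ _ hq₁ hq₂]

lemma B_deterministic {A : RNFAwtl Q α} (q₀ : Q) (hA : A.Deterministic) :
    (B A q₀).Deterministic := by
  obtain ⟨-, hδ, hδe⟩ := hA
  refine ⟨⟨Sum.inl (), rfl⟩, ?_, ?_⟩
  · rintro (u | q | ⟨q, a⟩) b
    · exact after_subsingleton hδ b q₀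
    · exact (hδ q b).image _
    · rintro s₁ ⟨q₁, hq₁, ha₁⟩ s₂ ⟨q₂, hq₂, ha₂⟩
      have : q₁ = q₂ := hδ q b hq₁ hq₂
      subst this
      exact after_subsingleton hδ a q₁ ha₁ ha₂
  · rintro (u | q | ⟨q, a⟩)
    · exact (hδe q₀).image _
    · exact (hδe q).image _
    · rintro s₁ ⟨q₁, hq₁, ha₁⟩ s₂ ⟨q₂, hq₂, ha₂⟩
      have : q₁ = q₂ := hδe q hq₁ hq₂
      subst this
      exact after_subsingleton hδ a q₁ ha₁ ha₂

end RF

/-- every RDFAwtl is equivalent to an RDFAwtl that reads and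
deletes the very first letter of the input in the first step of each
computation (no letter is translucent for its initial state). -/
theorem RDFAwtl_reads_first_letter (α : Type) [Fintype α] (Q : Type) [Fintype Q]
    (A : RNFAwtl Q α) (hA : A.Deterministic) :
    ∃ (Q' : Type) (_ : Fintype Q') (B : RNFAwtl Q' α),
      B.Deterministic ∧ B.lang = A.lang ∧ ∀ q₀ ∈ B.I, B.τ q₀ = ∅ := by
  obtain ⟨⟨q₀, hI⟩, hδ, hδe⟩ := hA
  refine ⟨Unit ⊕ Q ⊕ Q × α, inferInstance, RF.B A q₀,
    RF.B_deterministic q₀ ⟨⟨q₀, hI⟩, hδ, hδe⟩, ?_, ?_⟩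
  · ext w
    simp only [RNFAwtl.lang, Set.mem_setOf_eq]
    constructor
    · rintro ⟨p, hp, q, w', r, hw, hf⟩
      have hp' : p = Sum.inl () := hp
      subst hp'
      have hB : RF.AccFrom (RF.B A q₀) (Sum.inl (), w) := ⟨q, w', r, hw, hf⟩
      obtain ⟨qf, w'', r', h1, h2⟩ := RF.B_to_A A q₀ _ hB (q₀, w) ⟨rfl, rfl⟩
      exact ⟨q₀, by rw [hI]; rfl, qf, w'', r', h1, h2⟩
    · rintro ⟨p, hp, q, w', r, hw, hf⟩
      rw [hI, Set.mem_singleton_iff] at hp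
      rw [hp] at r
      obtain ⟨n, hn⟩ := RF.accFrom_to_accN (A := A) ⟨q, w', r, hw, hf⟩
      obtain ⟨qf, w'', r', h1, h2⟩ := RF.A_to_B A q₀ n w hn
      exact ⟨Sum.inl (), rfl, qf, w'', r', h1, h2⟩
  · rintro p hp
    have hp' : p = Sum.inl () := hp
    subst hp'
    rfl
end

section
/- The class ℒ(RDFAwtl) is closed under left quotient with respect to a single word: if L ⊆ Σ* is accepted by an RDFAwtl, then for every w ∈ Σ* the language w ⟍ L = { z ∈ Σ* : wz ∈ L } is accepted by an RDFAwtl. -/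
section LeftQuotientAux
open scoped Classical

namespace RNFAwtl

variable {Q α : Type}

/-- Deletion-only step (no `◁`-transitions). -/
def DelStep (A : RNFAwtl Q α) : Q × List α → Q × List α → Prop := fun c c' =>
  ∃ u a v, c.2 = u ++ a :: v ∧ (∀ x ∈ u, x ∈ A.τ c.1) ∧ a ∉ A.τ c.1 ∧
    c'.1 ∈ A.δ c.1 a ∧ c'.2 = u ++ v

def NF (A : RNFAwtl Q α) (c : Q × List α) : Prop := ∀ x ∈ c.2, x ∈ A.τ c.1

def Norm (A : RNFAwtl Q α) (c : Q × List α) : Set (Q × List α) :=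
  {c' | Relation.ReflTransGen A.DelStep c c' ∧ A.NF c'}

def AccFrom (A : RNFAwtl Q α) (c : Q × List α) : Prop :=
  ∃ q w', Relation.ReflTransGen A.Step c (q, w') ∧ (∀ x ∈ w', x ∈ A.τ q) ∧ q ∈ A.Facc

lemma accFrom_of_run {A : RNFAwtl Q α} {c c'} (h : Relation.ReflTransGen A.Step c c')
    (h2 : A.AccFrom c') : A.AccFrom c := by
  obtain ⟨q, w', r, h3, h4⟩ := h2
  exact ⟨q, w', h.trans r, h3, h4⟩

lemma accFrom_of_step {A : RNFAwtl Q α} {c c'} (h : A.Step c c')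
    (h2 : A.AccFrom c') : A.AccFrom c :=
  accFrom_of_run (Relation.ReflTransGen.single h) h2

lemma leftmost_unique {T : Set α} :
    ∀ {u u' : List α} {a a' : α} {v v' : List α},
    u ++ a :: v = u' ++ a' :: v' → (∀ x ∈ u, x ∈ T) → a ∉ T →
    (∀ x ∈ u', x ∈ T) → a' ∉ T → u = u' ∧ a = a' ∧ v = v'
  | [], [], a, a', v, v', h, _, _, _, _ => by
      simp only [List.nil_append, List.cons.injEq] at h
      exact ⟨rfl, h.1, h.2⟩
  | [], b' :: u', a, a', v, v', h, _, ha, hu', _ => by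
      simp only [List.nil_append, List.cons_append, List.cons.injEq] at h
      exact absurd (h.1 ▸ hu' b' (by simp)) ha
  | b :: u, [], a, a', v, v', h, hu, _, _, ha' => by
      simp only [List.nil_append, List.cons_append, List.cons.injEq] at h
      exact absurd (h.1 ▸ hu b (by simp)) ha'
  | b :: u, b' :: u', a, a', v, v', h, hu, ha, hu', ha' => by
      simp only [List.cons_append, List.cons.injEq] at h
      obtain ⟨h1, h2, h3⟩ := leftmost_unique h.2 (fun x hx => hu x (by simp [hx])) ha
        (fun x hx => hu' x (by simp [hx])) ha'
      exact ⟨by rw [h.1, h1], h2, h3⟩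

lemma delStep_det {A : RNFAwtl Q α} (hd : A.Deterministic) {c c₁ c₂ : Q × List α}
    (h1 : A.DelStep c c₁) (h2 : A.DelStep c c₂) : c₁ = c₂ := by
  obtain ⟨u, a, v, e, hu, ha, hq, e'⟩ := h1
  obtain ⟨u', a', v', f, hu', ha', hq', f'⟩ := h2
  obtain ⟨rfl, rfl, rfl⟩ := leftmost_unique (e.symm.trans f) hu ha hu' ha'
  have : c₁.1 = c₂.1 := hd.2.1 c.1 a hq hq'
  exact Prod.ext this (e'.trans f'.symm)

lemma NF.no_delStep {A : RNFAwtl Q α} {c c' : Q × List α} (h : A.NF c) :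
    ¬ A.DelStep c c' := by
  rintro ⟨u, a, v, e, hu, ha, _, _⟩
  exact ha (h a (by simp [e]))

lemma norm_subsingleton {A : RNFAwtl Q α} (hd : A.Deterministic) (c : Q × List α) :
    (A.Norm c).Subsingleton := by
  have key : ∀ {c c₁ : Q × List α}, Relation.ReflTransGen A.DelStep c c₁ → A.NF c₁ →
      ∀ c₂, Relation.ReflTransGen A.DelStep c c₂ → A.NF c₂ → c₁ = c₂ := by
    intro c c₁ h
    induction h using Relation.ReflTransGen.head_induction_on with
    | refl =>
        intro h1 c₂ h2 hn2
        rcases h2.cases_head with rfl | ⟨x, hx, _⟩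
        · rfl
        · exact absurd hx h1.no_delStep
    | head hstep _ ih =>
        intro h1 c₂ h2 hn2
        rcases h2.cases_head with rfl | ⟨x, hx, hx2⟩
        · exact absurd hstep hn2.no_delStep
        · exact ih h1 c₂ (delStep_det hd hstep hx ▸ hx2) hn2
  rintro x ⟨hx, hnx⟩ y ⟨hy, hny⟩
  exact key hx hnx y hy hny

lemma norm_mono {A : RNFAwtl Q α} {c c' p : Q × List α} (h : A.DelStep c c')
    (hp : p ∈ A.Norm c') : p ∈ A.Norm c :=
  ⟨Relation.ReflTransGen.head h hp.1, hp.2⟩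

lemma delRun_sublist {A : RNFAwtl Q α} {c c' : Q × List α}
    (h : Relation.ReflTransGen A.DelStep c c') : c'.2.Sublist c.2 := by
  induction h with
  | refl => exact List.Sublist.refl _
  | tail hstep hlast ih =>
      obtain ⟨u, a, v, e, _, _, _, e'⟩ := hlast
      refine List.Sublist.trans ?_ ih
      rw [e, e']
      exact (List.sublist_cons_self a v).append_left u

lemma norm_sublist {A : RNFAwtl Q α} {q : Q} {v : List α} {p : Q × List α}
    (h : p ∈ A.Norm (q, v)) : p.2.Sublist v := delRun_sublist h.1

lemma lift_delRun {A : RNFAwtl Q α} {c c' : Q × List α}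
    (h : Relation.ReflTransGen A.DelStep c c') (y : List α) :
    Relation.ReflTransGen A.Step (c.1, c.2 ++ y) (c'.1, c'.2 ++ y) := by
  refine Relation.ReflTransGen.lift (fun c : Q × List α => (c.1, c.2 ++ y)) ?_ _ _ h
  rintro ⟨q, t⟩ ⟨q', t'⟩ ⟨u, a, v, e, hu, ha, hq, e'⟩
  simp only at e e' hu ha hq
  subst e; subst e'
  exact Or.inl ⟨u, a, v ++ y, by simp, hu, ha, hq, by simp⟩

/-- The left-quotient automaton. -/
noncomputable def leftQuot (A : RNFAwtl Q α) (q₀ : Q) (w : List α) :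
    RNFAwtl (Option (Q × {v : List α // v.Sublist w})) α where
  τ s := match s with
    | none => ∅
    | some (q, _) => A.τ q
  I := { if h : (A.Norm (q₀, w)).Nonempty
         then some (h.choose.1, ⟨h.choose.2, norm_sublist h.choose_spec⟩)
         else none }
  δ s a := match s with
    | none => ∅
    | some (q, v) =>
      { s' | a ∉ A.τ q ∧ ∃ q₁ ∈ A.δ q a, ∃ p ∈ A.Norm (q₁, v.1),
          ∃ h : p.2.Sublist w, s' = some (p.1, ⟨p.2, h⟩) }
  δend s := match s with
    | none => ∅
    | some (q, v) =>
      { s' | q ∉ A.Facc ∧ ∃ q₁ ∈ A.δend q, ∃ p ∈ A.Norm (q₁, v.1),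
          ∃ h : p.2.Sublist w, s' = some (p.1, ⟨p.2, h⟩) }
  Facc := { s | ∃ q v, s = some (q, v) ∧ q ∈ A.Facc ∧ ∀ x ∈ v.1, x ∈ A.τ q }
  tr := by
    rintro (_ | ⟨q, v⟩) a ha
    · rfl
    · ext s'
      simp only [Set.mem_setOf_eq, Set.mem_empty_iff_false, iff_false, not_and]
      intro hna
      exact absurd ha hna
  accEnd := by
    rintro s ⟨q, v, rfl, hF, _⟩
    ext s'
    simp only [Set.mem_setOf_eq, Set.mem_empty_iff_false, iff_false, not_and]
    intro hn
    exact absurd hF hn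

end RNFAwtl

end LeftQuotientAux
section Fwd
namespace RNFAwtl
variable {Q α : Type}

lemma leftQuot_forward {A : RNFAwtl Q α} (q₀ : Q) (w : List α)
    {c cf : Q × List α} (h : Relation.ReflTransGen A.Step c cf)
    (hf : ∀ x ∈ cf.2, x ∈ A.τ cf.1) (hacc : cf.1 ∈ A.Facc) :
    ∀ v y, c.2 = v ++ y → v.Sublist w →
      ∃ p ∈ A.Norm (c.1, v), ∃ hp : p.2.Sublist w,
        (A.leftQuot q₀ w).AccFrom (some (p.1, ⟨p.2, hp⟩), y) := by
  induction h using Relation.ReflTransGen.head_induction_on with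
  | refl =>
      intro v y hsplit hv
      refine ⟨(cf.1, v), ⟨Relation.ReflTransGen.refl,
        fun x hx => hf x (by rw [hsplit]; exact List.mem_append_left _ hx)⟩, hv, ?_⟩
      refine ⟨some (cf.1, ⟨v, hv⟩), y, Relation.ReflTransGen.refl,
        fun x hx => hf x (by rw [hsplit]; exact List.mem_append_right _ hx),
        ⟨cf.1, ⟨v, hv⟩, rfl, hacc,
          fun x hx => hf x (by rw [hsplit]; exact List.mem_append_left _ hx)⟩⟩
  | @head c cm step rest ih =>
      intro v y hsplit hv
      rcases step with ⟨u, a, t, e, hu, ha, hq, e'⟩ | ⟨htr, hq, e'⟩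
      · -- deletion step in A
        rcases List.append_eq_append_iff.mp (hsplit.symm.trans e) with
          ⟨k, hk1, hk2⟩ | ⟨k, hk1, hk2⟩
        · -- the deleted letter lies in y : u = v ++ k, y = k ++ a :: t
          have hvtr : ∀ x ∈ v, x ∈ A.τ c.1 := fun x hx =>
            hu x (by rw [hk1]; exact List.mem_append_left _ hx)
          have hktr : ∀ x ∈ k, x ∈ A.τ c.1 := fun x hx =>
            hu x (by rw [hk1]; exact List.mem_append_right _ hx)
          obtain ⟨p, hpN, hp, hAcc⟩ := ih v (k ++ t)
            (by rw [e', hk1, List.append_assoc]) hv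
          refine ⟨(c.1, v), ⟨Relation.ReflTransGen.refl, hvtr⟩, hv, ?_⟩
          refine accFrom_of_step (c' := (some (p.1, ⟨p.2, hp⟩), k ++ t)) (Or.inl ⟨k, a, t, hk2, hktr, ha,
            ⟨ha, cm.1, hq, p, hpN, hp, rfl⟩, rfl⟩) hAcc
        · -- v = u ++ k
          match k, hk1, hk2 with
          | [], hk1, hk2 =>
            -- u = v, y = a :: t
            rw [List.append_nil] at hk1
            rw [List.nil_append] at hk2
            obtain ⟨p, hpN, hp, hAcc⟩ := ih v t (by rw [e', hk1]) hv
            have hvtr : ∀ x ∈ v, x ∈ A.τ c.1 := hk1 ▸ hu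
            refine ⟨(c.1, v), ⟨Relation.ReflTransGen.refl, hvtr⟩, hv, ?_⟩
            refine accFrom_of_step (c' := (some (p.1, ⟨p.2, hp⟩), t)) (Or.inl ⟨[], a, t, hk2.symm, by simp, ha,
              ⟨ha, cm.1, hq, p, hpN, hp, rfl⟩, rfl⟩) hAcc
          | b :: k, hk1, hk2 =>
            -- the deleted letter lies in v : v = u ++ b :: k, t = k ++ y
            obtain ⟨rfl, ht⟩ : a = b ∧ t = k ++ y := by
              simpa using hk2
            have hsub : (u ++ k).Sublist w :=
              List.Sublist.trans ((List.sublist_cons_self a k).append_left u) (hk1 ▸ hv)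
            obtain ⟨p, hpN, hp, hAcc⟩ := ih (u ++ k) y
              (by rw [e', ht, List.append_assoc]) hsub
            have hstep : A.DelStep (c.1, v) (cm.1, u ++ k) :=
              ⟨u, a, k, hk1, hu, ha, hq, rfl⟩
            exact ⟨p, norm_mono hstep hpN, hp, hAcc⟩
      · -- ◁-step in A
        obtain ⟨p, hpN, hp, hAcc⟩ := ih v y (by rw [e', hsplit]) hv
        have hvtr : ∀ x ∈ v, x ∈ A.τ c.1 := fun x hx =>
          htr x (by rw [hsplit]; exact List.mem_append_left _ hx)
        have hytr : ∀ x ∈ y, x ∈ A.τ c.1 := fun x hx =>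
          htr x (by rw [hsplit]; exact List.mem_append_right _ hx)
        have hnF : c.1 ∉ A.Facc := fun hF => by
          have := A.accEnd c.1 hF
          rw [this] at hq
          exact hq
        refine ⟨(c.1, v), ⟨Relation.ReflTransGen.refl, hvtr⟩, hv, ?_⟩
        refine accFrom_of_step (c' := (some (p.1, ⟨p.2, hp⟩), y)) (Or.inr ⟨hytr, ⟨hnF, cm.1, hq, p, hpN, hp, rfl⟩, rfl⟩) hAcc

end RNFAwtl
end Fwd
section Bwd
namespace RNFAwtl
variable {Q α : Type}

lemma leftQuot_backward {A : RNFAwtl Q α} (q₀ : Q) (w : List α)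
    {cB cf : Option (Q × {v : List α // v.Sublist w}) × List α}
    (h : Relation.ReflTransGen (A.leftQuot q₀ w).Step cB cf)
    (hf : ∀ x ∈ cf.2, x ∈ (A.leftQuot q₀ w).τ cf.1)
    (hacc : cf.1 ∈ (A.leftQuot q₀ w).Facc) :
    ∀ q v (hv : v.Sublist w), cB.1 = some (q, ⟨v, hv⟩) → (∀ x ∈ v, x ∈ A.τ q) →
      A.AccFrom (q, v ++ cB.2) := by
  induction h using Relation.ReflTransGen.head_induction_on with
  | refl =>
      intro q v hv hcB hvtr
      obtain ⟨q', v', he, hF, htr'⟩ := hacc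
      rw [hcB] at he
      have hq' : q' = q := by
        have := Option.some_injective _ he.symm
        exact congrArg Prod.fst this
      rw [hq'] at hF
      refine ⟨q, v ++ cf.2, Relation.ReflTransGen.refl, ?_, hF⟩
      intro x hx
      rcases List.mem_append.mp hx with hx | hx
      · exact hvtr x hx
      · have := hf x hx
        rw [hcB] at this
        exact this
  | @head cB cm step rest ih =>
      intro q v hv hcB hvtr
      rcases step with ⟨u, a, t, e, hu, ha, hq, e'⟩ | ⟨htr, hq, e'⟩
      · -- deletion step in B
        rw [hcB] at hq hu ha
        obtain ⟨hna, q₁, hq₁, p, hpN, hp, hmid⟩ := hq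
        have hstep : A.Step (q, v ++ cB.2) (q₁, v ++ (u ++ t)) := by
          refine Or.inl ⟨v ++ u, a, t, ?_, ?_, hna, hq₁, by simp⟩
          · rw [e, List.append_assoc]
          · intro x hx
            rcases List.mem_append.mp hx with hx | hx
            · exact hvtr x hx
            · exact hu x hx
        have hrun : Relation.ReflTransGen A.Step (q₁, v ++ (u ++ t))
            (p.1, p.2 ++ (u ++ t)) := lift_delRun hpN.1 (u ++ t)
        have hAcc := ih p.1 p.2 hp hmid hpN.2
        rw [e'] at hAcc
        exact accFrom_of_step hstep (accFrom_of_run hrun hAcc)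
      · -- ◁-step in B
        rw [hcB] at hq htr
        obtain ⟨hnF, q₁, hq₁, p, hpN, hp, hmid⟩ := hq
        have hstep : A.Step (q, v ++ cB.2) (q₁, v ++ cB.2) := by
          refine Or.inr ⟨?_, hq₁, rfl⟩
          intro x hx
          rcases List.mem_append.mp hx with hx | hx
          · exact hvtr x hx
          · exact htr x hx
        have hrun : Relation.ReflTransGen A.Step (q₁, v ++ cB.2)
            (p.1, p.2 ++ cB.2) := lift_delRun hpN.1 cB.2
        have hAcc := ih p.1 p.2 hp hmid hpN.2
        rw [e'] at hAcc
        exact accFrom_of_step hstep (accFrom_of_run hrun hAcc)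

lemma leftQuot_none {A : RNFAwtl Q α} (q₀ : Q) (w : List α)
    {c c' : Option (Q × {v : List α // v.Sublist w}) × List α}
    (h : Relation.ReflTransGen (A.leftQuot q₀ w).Step c c') (hc : c.1 = none) :
    c'.1 = none := by
  induction h using Relation.ReflTransGen.head_induction_on with
  | refl => exact hc
  | @head c cm step rest ih =>
      exfalso
      rcases step with ⟨u, a, t, e, hu, ha, hq, e'⟩ | ⟨htr, hq, e'⟩ <;>
        rw [hc] at hq <;> exact hq

end RNFAwtl
end Bwd
/-- ℒ(RDFAwtl) is closed under left quotient by a single word. -/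
theorem RDFAwtl_closed_leftQuotient (α : Type) [Fintype α]
    (L : Set (List α)) (hL : L ∈ RDFAwtlLangs α) (w : List α) :
    { z : List α | w ++ z ∈ L } ∈ RDFAwtlLangs α := by
  classical
  obtain ⟨Q, hQ, A, hdet, hlang⟩ := hL
  obtain ⟨⟨q₀, hI⟩, hδ, hδe⟩ := id hdet
  haveI := hQ
  haveI : Fintype {v : List α // v.Sublist w} :=
    Fintype.ofList ((w.sublists).pmap (fun v h => ⟨v, List.mem_sublists.mp h⟩)
      (fun _ h => h))
      (fun v => List.mem_pmap.mpr ⟨v.1, List.mem_sublists.mpr v.2, Subtype.ext rfl⟩)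
  refine ⟨Option (Q × {v : List α // v.Sublist w}), inferInstance,
    A.leftQuot q₀ w, ⟨⟨_, rfl⟩, ?_, ?_⟩, ?_⟩
  · -- δ deterministic
    rintro (_ | ⟨q, v⟩) a
    · exact fun s hs => absurd hs (Set.notMem_empty s)
    · rintro s₁ ⟨_, q₁, hq₁, p, hpN, hp, rfl⟩ s₂ ⟨_, q₂, hq₂, p', hpN', hp', rfl⟩
      obtain rfl : q₁ = q₂ := hδ q a hq₁ hq₂
      obtain rfl : p = p' := RNFAwtl.norm_subsingleton hdet _ hpN hpN'
      rfl
  · -- δend deterministic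
    rintro (_ | ⟨q, v⟩)
    · exact fun s hs => absurd hs (Set.notMem_empty s)
    · rintro s₁ ⟨_, q₁, hq₁, p, hpN, hp, rfl⟩ s₂ ⟨_, q₂, hq₂, p', hpN', hp', rfl⟩
      obtain rfl : q₁ = q₂ := hδe q hq₁ hq₂
      obtain rfl : p = p' := RNFAwtl.norm_subsingleton hdet _ hpN hpN'
      rfl
  · -- language equality
    ext z
    constructor
    · -- B accepts z → w ++ z ∈ L
      rintro ⟨s₀, hs₀, qf, w', run, trf, facf⟩
      have hs₀ : s₀ = if h : (A.Norm (q₀, w)).Nonempty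
          then some (h.choose.1, ⟨h.choose.2, RNFAwtl.norm_sublist h.choose_spec⟩)
          else none := hs₀
      by_cases hne : (A.Norm (q₀, w)).Nonempty
      · rw [dif_pos hne] at hs₀
        subst hs₀
        have hch := hne.choose_spec
        have hAcc : A.AccFrom (hne.choose.1, hne.choose.2 ++ z) := by
          exact RNFAwtl.leftQuot_backward q₀ w run trf facf hne.choose.1 hne.choose.2
            (RNFAwtl.norm_sublist hch) rfl hch.2
        have hlift : Relation.ReflTransGen A.Step (q₀, w ++ z)
            (hne.choose.1, hne.choose.2 ++ z) := RNFAwtl.lift_delRun hch.1 z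
        have : A.AccFrom (q₀, w ++ z) := RNFAwtl.accFrom_of_run hlift hAcc
        obtain ⟨q', w'', r, htr, hF⟩ := this
        rw [← hlang]
        exact ⟨q₀, by rw [hI]; rfl, q', w'', r, htr, hF⟩
      · rw [dif_neg hne] at hs₀
        subst hs₀
        have hqf : qf = none := RNFAwtl.leftQuot_none q₀ w run rfl
        obtain ⟨q', v', he, _, _⟩ := facf
        rw [hqf] at he
        exact absurd he (by simp)
    · -- w ++ z ∈ L → B accepts z
      intro hz
      rw [Set.mem_setOf_eq, ← hlang] at hz
      obtain ⟨q₀', hq₀', qf, w', run, trf, facf⟩ := hz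
      rw [hI, Set.mem_singleton_iff] at hq₀'
      subst hq₀'
      obtain ⟨p, hpN, hp, hAcc⟩ :=
        RNFAwtl.leftQuot_forward (A := A) q₀' w run trf facf w z rfl (List.Sublist.refl w)
      have hne : (A.Norm (q₀', w)).Nonempty := ⟨p, hpN⟩
      have hcp : hne.choose = p := RNFAwtl.norm_subsingleton hdet _ hne.choose_spec hpN
      obtain ⟨qf', w'', r, htr, hF⟩ := hAcc
      refine ⟨some (p.1, ⟨p.2, hp⟩), ?_, qf', w'', r, htr, hF⟩
      show some (p.1, (⟨p.2, hp⟩ : {v : List α // v.Sublist w})) =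
        if h : (A.Norm (q₀', w)).Nonempty
          then some (h.choose.1,
            (⟨h.choose.2, RNFAwtl.norm_sublist h.choose_spec⟩ : {v : List α // v.Sublist w}))
          else none
      rw [dif_pos hne]
      subst hcp
      rfl
end

section
/- The class ℒ(RDFAwtl) is closed under disjoint shuffle: if Σ_A and Σ_B are disjoint alphabets and L_A ⊆ Σ_A*, L_B ⊆ Σ_B* are accepted by RDFAwtls, then the shuffle L_A ⧢ L_B ⊆ (Σ_A ∪ Σ_B)* is accepted by an RDFAwtl. -/
/-- `Shuffles u v w` holds iff `w` is an interleaving (shuffle) of `u` and `v`. -/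
inductive Shuffles {α : Type} : List α → List α → List α → Prop
  | nil : Shuffles [] [] []
  | left {x : α} {u v w : List α} : Shuffles u v w → Shuffles (x :: u) v (x :: w)
  | right {x : α} {u v w : List α} : Shuffles u v w → Shuffles u (x :: v) (x :: w)

/-- The shuffle of two languages. -/
def shuffleLang {α : Type} (L₁ L₂ : Set (List α)) : Set (List α) :=
  { w | ∃ u ∈ L₁, ∃ v ∈ L₂, Shuffles u v w }

section ShufAux

open Classical

variable {α : Type}

/-- Classical filter of a list by a set. -/
noncomputable def sfilter (S : Set α) : List α → List α
  | [] => []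
  | c :: w => if c ∈ S then c :: sfilter S w else sfilter S w

@[simp] theorem sfilter_nil (S : Set α) : sfilter S [] = [] := rfl

theorem sfilter_cons (S : Set α) (c : α) (w : List α) :
    sfilter S (c :: w) = if c ∈ S then c :: sfilter S w else sfilter S w := rfl

theorem sfilter_cons_pos (S : Set α) {c : α} (w : List α) (h : c ∈ S) :
    sfilter S (c :: w) = c :: sfilter S w := by simp [sfilter_cons, h]

theorem sfilter_cons_neg (S : Set α) {c : α} (w : List α) (h : c ∉ S) :
    sfilter S (c :: w) = sfilter S w := by simp [sfilter_cons, h]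

@[simp] theorem mem_sfilter {S : Set α} {x : α} {w : List α} :
    x ∈ sfilter S w ↔ x ∈ w ∧ x ∈ S := by
  induction w with
  | nil => simp
  | cons c w ih =>
    by_cases h : c ∈ S
    · rw [sfilter_cons_pos S w h]
      constructor
      · intro hmem
        rcases List.mem_cons.1 hmem with rfl | hx
        · exact ⟨List.mem_cons_self, h⟩
        · exact ⟨List.mem_cons_of_mem _ (ih.1 hx).1, (ih.1 hx).2⟩
      · rintro ⟨hx, hxS⟩
        rcases List.mem_cons.1 hx with rfl | hx
        · exact List.mem_cons_self
        · exact List.mem_cons_of_mem _ (ih.2 ⟨hx, hxS⟩)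
    · rw [sfilter_cons_neg S w h]
      constructor
      · intro hx
        exact ⟨List.mem_cons_of_mem _ (ih.1 hx).1, (ih.1 hx).2⟩
      · rintro ⟨hx, hxS⟩
        rcases List.mem_cons.1 hx with rfl | hx
        · exact absurd hxS h
        · exact ih.2 ⟨hx, hxS⟩

theorem sfilter_append (S : Set α) (x y : List α) :
    sfilter S (x ++ y) = sfilter S x ++ sfilter S y := by
  induction x with
  | nil => simp
  | cons c x ih =>
    by_cases h : c ∈ S
    · simp [sfilter_cons_pos S _ h, ih]
    · simp [sfilter_cons_neg S _ h, ih]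

theorem sfilter_eq_self {S : Set α} {w : List α} (h : ∀ c ∈ w, c ∈ S) :
    sfilter S w = w := by
  induction w with
  | nil => rfl
  | cons c w ih =>
    rw [sfilter_cons_pos S w (h c (List.mem_cons_self))]
    rw [ih fun c hc => h c (List.mem_cons_of_mem _ hc)]

theorem sfilter_decomp {S : Set α} {a : α} {t : List α} :
    ∀ {w s : List α}, sfilter S w = s ++ a :: t →
      ∃ x y, w = x ++ a :: y ∧ sfilter S x = s ∧ sfilter S y = t := by
  intro w
  induction w with
  | nil => intro s h; simp at h
  | cons c w ih =>
    intro s h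
    by_cases hc : c ∈ S
    · rw [sfilter_cons_pos S w hc] at h
      cases s with
      | nil =>
        simp at h
        exact ⟨[], w, by simp [h.1], rfl, h.2⟩
      | cons c' s =>
        simp at h
        obtain ⟨rfl, h2⟩ := h
        obtain ⟨x, y, rfl, hx, hy⟩ := ih h2
        exact ⟨c :: x, y, rfl, by rw [sfilter_cons_pos S x hc, hx], hy⟩
    · rw [sfilter_cons_neg S w hc] at h
      obtain ⟨x, y, rfl, hx, hy⟩ := ih h
      exact ⟨c :: x, y, rfl, by rw [sfilter_cons_neg S x hc, hx], hy⟩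

theorem shuffles_sfilter {SA SB : Set α} (hdisj : Disjoint SA SB) :
    ∀ {w : List α}, (∀ c ∈ w, c ∈ SA ∨ c ∈ SB) →
      Shuffles (sfilter SA w) (sfilter SB w) w := by
  intro w
  induction w with
  | nil => intro _; exact Shuffles.nil
  | cons c w ih =>
    intro h
    rcases h c (List.mem_cons_self) with hc | hc
    · have hcB : c ∉ SB := Set.disjoint_left.1 hdisj hc
      rw [sfilter_cons_pos SA w hc, sfilter_cons_neg SB w hcB]
      exact Shuffles.left (ih fun c hc => h c (List.mem_cons_of_mem _ hc))
    · have hcA : c ∉ SA := Set.disjoint_right.1 hdisj hc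
      rw [sfilter_cons_neg SA w hcA, sfilter_cons_pos SB w hc]
      exact Shuffles.right (ih fun c hc => h c (List.mem_cons_of_mem _ hc))

theorem sfilter_of_shuffles {SA SB : Set α} (hdisj : Disjoint SA SB)
    {u v w : List α} (hs : Shuffles u v w)
    (hu : ∀ c ∈ u, c ∈ SA) (hv : ∀ c ∈ v, c ∈ SB) :
    sfilter SA w = u ∧ sfilter SB w = v ∧ ∀ c ∈ w, c ∈ SA ∨ c ∈ SB := by
  induction hs with
  | nil => simp
  | @left x u v w hs ih =>
    have hx : x ∈ SA := hu x (List.mem_cons_self)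
    have hxB : x ∉ SB := Set.disjoint_left.1 hdisj hx
    obtain ⟨h1, h2, h3⟩ := ih (fun c hc => hu c (List.mem_cons_of_mem _ hc)) hv
    refine ⟨?_, ?_, ?_⟩
    · rw [sfilter_cons_pos SA w hx, h1]
    · rw [sfilter_cons_neg SB w hxB, h2]
    · intro c hc
      rcases List.mem_cons.1 hc with rfl | hc
      · exact Or.inl hx
      · exact h3 c hc
  | @right x u v w hs ih =>
    have hx : x ∈ SB := hv x (List.mem_cons_self)
    have hxA : x ∉ SA := Set.disjoint_right.1 hdisj hx
    obtain ⟨h1, h2, h3⟩ := ih hu (fun c hc => hv c (List.mem_cons_of_mem _ hc))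
    refine ⟨?_, ?_, ?_⟩
    · rw [sfilter_cons_neg SA w hxA, h1]
    · rw [sfilter_cons_pos SB w hx, h2]
    · intro c hc
      rcases List.mem_cons.1 hc with rfl | hc
      · exact Or.inr hx
      · exact h3 c hc

end ShufAux

section Combine

variable {α QA QB : Type}

/-- The combined automaton for the disjoint-shuffle construction: run `A` with
all of `SB` translucent; upon acceptance of `A`, switch to `B`'s initial state,
with `B`-phase states deleting residual `SA` letters on sight. -/
def combineAut (SA SB : Set α) (A : RNFAwtl QA α) (B : RNFAwtl QB α)
    (p₀ : QB) : RNFAwtl (QA ⊕ QB) α where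
  τ := fun s => match s with
    | .inl q => (A.τ q ∩ SA) ∪ SB
    | .inr p => B.τ p ∩ SB
  I := Sum.inl '' A.I
  δ := fun s a => match s with
    | .inl q => {s' | a ∈ SA ∧ a ∉ SB ∧ a ∉ A.τ q ∧ ∃ q', q' ∈ A.δ q a ∧ s' = .inl q'}
    | .inr p => {s' | (a ∈ SA ∧ a ∉ SB ∧ s' = .inr p) ∨
        (a ∈ SB ∧ a ∉ B.τ p ∧ ∃ p', p' ∈ B.δ p a ∧ s' = .inr p')}
  δend := fun s => match s with
    | .inl q => (Sum.inl '' A.δend q) ∪ {s' | q ∈ A.Facc ∧ s' = .inr p₀}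
    | .inr p => Sum.inr '' B.δend p
  Facc := Sum.inr '' B.Facc
  tr := by
    rintro (q | p) a ha
    · ext s; simp only [Set.mem_setOf_eq, Set.mem_empty_iff_false, iff_false]
      rintro ⟨hSA, hSB, hτ, -⟩
      rcases (Set.mem_union _ _ _).1 ha with h | h
      · exact hτ h.1
      · exact hSB h
    · ext s; simp only [Set.mem_setOf_eq, Set.mem_empty_iff_false, iff_false]
      rintro (⟨-, hSB, -⟩ | ⟨-, hτ, -⟩)
      · exact hSB ha.2
      · exact hτ ha.1
  accEnd := by
    rintro s hs
    obtain ⟨p, hp, rfl⟩ := hs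
    simp [B.accEnd p hp]

variable {SA SB : Set α} {A : RNFAwtl QA α} {B : RNFAwtl QB α} {p₀ : QB}

/-- Membership facts about the combined automaton, by definitional unfolding. -/
theorem combine_tau_inl {q : QA} {c : α} :
    c ∈ (combineAut SA SB A B p₀).τ (Sum.inl q) ↔ (c ∈ A.τ q ∧ c ∈ SA) ∨ c ∈ SB :=
  Iff.rfl

theorem combine_tau_inr {p : QB} {c : α} :
    c ∈ (combineAut SA SB A B p₀).τ (Sum.inr p) ↔ c ∈ B.τ p ∧ c ∈ SB :=
  Iff.rfl

/-- Phase A, single step: a step of `A` on the `SA`-subword is simulated. -/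
theorem combine_stepA (hdisj : Disjoint SA SB) {c c' : QA × List α}
    (hstep : A.Step c c') {w : List α}
    (hw : sfilter SA w = c.2) (hall : ∀ x ∈ w, x ∈ SA ∨ x ∈ SB) :
    ∃ w', (combineAut SA SB A B p₀).Step (Sum.inl c.1, w) (Sum.inl c'.1, w') ∧
      sfilter SA w' = c'.2 ∧ sfilter SB w' = sfilter SB w ∧
      ∀ x ∈ w', x ∈ SA ∨ x ∈ SB := by
  rcases hstep with ⟨s, a, t, hu, hpre, haτ, hδ, hu'⟩ | ⟨htr, hδe, hu'⟩
  · -- deletion step of A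
    rw [hu] at hw
    have haSA : a ∈ SA := by
      have : a ∈ sfilter SA w := hw ▸ (by simp : a ∈ s ++ a :: t)
      exact (mem_sfilter.1 this).2
    obtain ⟨x, y, rfl, hx, hy⟩ := sfilter_decomp hw
    refine ⟨x ++ y, Or.inl ⟨x, a, y, rfl, ?_, ?_, ?_, rfl⟩, ?_, ?_, ?_⟩
    · intro e he
      rcases hall e (by simp [he]) with heA | heB
      · have hes : e ∈ s := hx ▸ mem_sfilter.2 ⟨he, heA⟩
        exact combine_tau_inl.2 (Or.inl ⟨hpre e hes, heA⟩)
      · exact combine_tau_inl.2 (Or.inr heB)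
    · intro h
      rcases combine_tau_inl.1 h with ⟨h1, -⟩ | h2
      · exact haτ h1
      · exact Set.disjoint_left.1 hdisj haSA h2
    · exact ⟨haSA, Set.disjoint_left.1 hdisj haSA, haτ, c'.1, hδ, rfl⟩
    · rw [hu', sfilter_append, hx, hy]
    · rw [sfilter_append, sfilter_append, sfilter_cons_neg SB y
        (Set.disjoint_left.1 hdisj haSA)]
    · intro e he
      rcases List.mem_append.1 he with he | he
      · exact hall e (by simp [he])
      · exact hall e (by simp [he])
  · -- end-of-tape step of A
    refine ⟨w, Or.inr ⟨?_, ?_, rfl⟩, ?_, rfl, hall⟩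
    · intro e he
      rcases hall e he with heA | heB
      · have : e ∈ c.2 := hw ▸ mem_sfilter.2 ⟨he, heA⟩
        exact combine_tau_inl.2 (Or.inl ⟨htr e this, heA⟩)
      · exact combine_tau_inl.2 (Or.inr heB)
    · exact Set.mem_union_left _ ⟨c'.1, hδe, rfl⟩
    · rw [hu', hw]

/-- Phase A, many steps. -/
theorem combine_rtcA (hdisj : Disjoint SA SB) {c c' : QA × List α}
    (h : Relation.ReflTransGen A.Step c c') :
    ∀ {w : List α}, sfilter SA w = c.2 → (∀ x ∈ w, x ∈ SA ∨ x ∈ SB) →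
    ∃ w', Relation.ReflTransGen (combineAut SA SB A B p₀).Step
        (Sum.inl c.1, w) (Sum.inl c'.1, w') ∧
      sfilter SA w' = c'.2 ∧ sfilter SB w' = sfilter SB w ∧
      ∀ x ∈ w', x ∈ SA ∨ x ∈ SB := by
  induction h with
  | refl => exact fun hw hall => ⟨_, Relation.ReflTransGen.refl, hw, rfl, hall⟩
  | tail hrt hstep ih =>
    intro w hw hall
    obtain ⟨w₁, hp, h1, h2, h3⟩ := ih hw hall
    obtain ⟨w₂, hstep', g1, g2, g3⟩ := combine_stepA (p₀ := p₀) hdisj hstep h1 h3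
    exact ⟨w₂, hp.tail hstep', g1, g2.trans h2, g3⟩

/-- Lifting a self-loop step of the combined automaton under a translucent letter. -/
theorem combine_consLift {p : QB} {s s' : List α} {c : α}
    (h : (combineAut SA SB A B p₀).Step (Sum.inr p, s) (Sum.inr p, s'))
    (hc : c ∈ (combineAut SA SB A B p₀).τ (Sum.inr p)) :
    (combineAut SA SB A B p₀).Step (Sum.inr p, c :: s) (Sum.inr p, c :: s') := by
  rcases h with ⟨u, a, v, h1, h2, h3, h4, h5⟩ | ⟨h1, h2, h3⟩
  · refine Or.inl ⟨c :: u, a, v, by rw [show s = u ++ a :: v from h1]; rfl, ?_, h3, h4, ?_⟩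
    · intro e he
      rcases List.mem_cons.1 he with rfl | he
      · exact hc
      · exact h2 e he
    · rw [show s' = u ++ v from h5]; rfl
  · refine Or.inr ⟨?_, h2, ?_⟩
    · intro e he
      rcases List.mem_cons.1 he with rfl | he
      · exact hc
      · exact h1 e he
    · rw [show s' = s from h3]

/-- Deleting the residual `SA` letters of a prefix during phase B. -/
theorem combine_delSA (hdisj : Disjoint SA SB) {p : QB} :
    ∀ (w z : List α), (∀ x ∈ w, x ∈ SA ∨ x ∈ SB) →
      (∀ b ∈ sfilter SB w, b ∈ B.τ p) →
      Relation.ReflTransGen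
        (fun s s' => (combineAut SA SB A B p₀).Step (Sum.inr p, s) (Sum.inr p, s'))
        (w ++ z) (sfilter SB w ++ z) := by
  intro w
  induction w with
  | nil => intro z _ _; exact Relation.ReflTransGen.refl
  | cons c w ih =>
    intro z hall htr
    rcases hall c (List.mem_cons_self) with hc | hc
    · have hcB : c ∉ SB := Set.disjoint_left.1 hdisj hc
      rw [sfilter_cons_neg SB w hcB]
      refine Relation.ReflTransGen.head ?_
        (ih z (fun x hx => hall x (List.mem_cons_of_mem _ hx))
          (by rw [sfilter_cons_neg SB w hcB] at htr; exact htr))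
      refine Or.inl ⟨[], c, w ++ z, rfl, by simp, ?_, Or.inl ⟨hc, hcB, rfl⟩, rfl⟩
      intro h
      exact hcB (combine_tau_inr.1 h).2
    · rw [sfilter_cons_pos SB w hc]
      have hcτ : c ∈ (combineAut SA SB A B p₀).τ (Sum.inr p) := by
        refine combine_tau_inr.2 ⟨?_, hc⟩
        exact htr c (by rw [sfilter_cons_pos SB w hc]; exact List.mem_cons_self)
      have hpath := ih z (fun x hx => hall x (List.mem_cons_of_mem _ hx))
        (fun b hb => htr b (by rw [sfilter_cons_pos SB w hc]; exact List.mem_cons_of_mem _ hb))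
      have := Relation.ReflTransGen.lift
        (p := fun s s' => (combineAut SA SB A B p₀).Step (Sum.inr p, s) (Sum.inr p, s'))
        (fun l => c :: l) (fun a b hab => combine_consLift hab hcτ) _ _ hpath
      simpa using this

theorem combine_delSA' (hdisj : Disjoint SA SB) {p : QB}
    (w z : List α) (hall : ∀ x ∈ w, x ∈ SA ∨ x ∈ SB)
    (htr : ∀ b ∈ sfilter SB w, b ∈ B.τ p) :
    Relation.ReflTransGen (combineAut SA SB A B p₀).Step
      (Sum.inr p, w ++ z) (Sum.inr p, sfilter SB w ++ z) :=
  Relation.ReflTransGen.lift (fun l => ((Sum.inr p : QA ⊕ QB), l))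
    (fun _ _ h => h) _ _ (combine_delSA hdisj w z hall htr)

/-- Phase B, single step: a step of `B` on the `SB`-subword is simulated. -/
theorem combine_stepB (hdisj : Disjoint SA SB) {c c' : QB × List α}
    (hstep : B.Step c c') {w : List α}
    (hw : sfilter SB w = c.2) (hall : ∀ x ∈ w, x ∈ SA ∨ x ∈ SB) :
    ∃ w', Relation.ReflTransGen (combineAut SA SB A B p₀).Step
        (Sum.inr c.1, w) (Sum.inr c'.1, w') ∧
      sfilter SB w' = c'.2 ∧ ∀ x ∈ w', x ∈ SA ∨ x ∈ SB := by
  rcases hstep with ⟨s, b, t, hu, hpre, hbτ, hδ, hu'⟩ | ⟨htr, hδe, hu'⟩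
  · -- deletion step of B
    rw [hu] at hw
    have hbSB : b ∈ SB := by
      have : b ∈ sfilter SB w := hw ▸ (by simp : b ∈ s ++ b :: t)
      exact (mem_sfilter.1 this).2
    obtain ⟨x, y, rfl, hx, hy⟩ := sfilter_decomp hw
    have hsS : ∀ e ∈ s, e ∈ SB := fun e he => (mem_sfilter.1 (hx ▸ he : e ∈ sfilter SB x)).2
    have path1 : Relation.ReflTransGen (combineAut SA SB A B p₀).Step
        (Sum.inr c.1, x ++ b :: y) (Sum.inr c.1, s ++ b :: y) := by
      have := combine_delSA' (A := A) (p₀ := p₀) hdisj x (b :: y)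
        (fun e he => hall e (by simp [he])) (fun e he => hpre e (hx ▸ he))
      rwa [hx] at this
    refine ⟨s ++ y, path1.tail (Or.inl ⟨s, b, y, rfl, ?_, ?_, ?_, rfl⟩), ?_, ?_⟩
    · intro e he
      exact combine_tau_inr.2 ⟨hpre e he, hsS e he⟩
    · intro h
      exact hbτ (combine_tau_inr.1 h).1
    · exact Or.inr ⟨hbSB, hbτ, c'.1, hδ, rfl⟩
    · rw [hu', sfilter_append, sfilter_eq_self hsS, hy]
    · intro e he
      rcases List.mem_append.1 he with he | he
      · exact Or.inr (hsS e he)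
      · exact hall e (by simp [he])
  · -- end-of-tape step of B
    have hvS : ∀ e ∈ c.2, e ∈ SB := fun e he =>
      (mem_sfilter.1 (hw ▸ he : e ∈ sfilter SB w)).2
    have path1 : Relation.ReflTransGen (combineAut SA SB A B p₀).Step
        (Sum.inr c.1, w) (Sum.inr c.1, c.2) := by
      have := combine_delSA' (A := A) (p₀ := p₀) hdisj w [] hall
        (by rw [hw]; exact htr)
      rwa [List.append_nil, List.append_nil, hw] at this
    refine ⟨c.2, path1.tail (Or.inr ⟨?_, ?_, rfl⟩), ?_, ?_⟩
    · intro e he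
      exact combine_tau_inr.2 ⟨htr e he, hvS e he⟩
    · exact ⟨c'.1, hδe, rfl⟩
    · rw [hu', sfilter_eq_self hvS]
    · exact fun e he => Or.inr (hvS e he)

/-- Phase B, many steps. -/
theorem combine_rtcB (hdisj : Disjoint SA SB) {c c' : QB × List α}
    (h : Relation.ReflTransGen B.Step c c') :
    ∀ {w : List α}, sfilter SB w = c.2 → (∀ x ∈ w, x ∈ SA ∨ x ∈ SB) →
    ∃ w', Relation.ReflTransGen (combineAut SA SB A B p₀).Step
        (Sum.inr c.1, w) (Sum.inr c'.1, w') ∧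
      sfilter SB w' = c'.2 ∧ ∀ x ∈ w', x ∈ SA ∨ x ∈ SB := by
  induction h with
  | refl => exact fun hw hall => ⟨_, Relation.ReflTransGen.refl, hw, hall⟩
  | tail hrt hstep ih =>
    intro w hw hall
    obtain ⟨w₁, hp, h1, h3⟩ := ih hw hall
    obtain ⟨w₂, hp', g1, g3⟩ := combine_stepB (p₀ := p₀) hdisj hstep h1 h3
    exact ⟨w₂, hp.trans hp', g1, g3⟩

/-- Backward invariant: a computation of the combined automaton from
`(inl q₀, w)` projects to computations of `A` and `B` on the subwords. -/
theorem combine_inv (hdisj : Disjoint SA SB) {q₀ : QA} {w : List α}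
    {cf : (QA ⊕ QB) × List α}
    (h : Relation.ReflTransGen (combineAut SA SB A B p₀).Step (Sum.inl q₀, w) cf) :
    (∀ x ∈ w, x ∈ SA ∨ x ∈ SB ∨ x ∈ cf.2) ∧
    ((∃ q, cf.1 = Sum.inl q ∧
        Relation.ReflTransGen A.Step (q₀, sfilter SA w) (q, sfilter SA cf.2) ∧
        sfilter SB cf.2 = sfilter SB w) ∨
     (∃ p, cf.1 = Sum.inr p ∧
        (∃ qf rA, Relation.ReflTransGen A.Step (q₀, sfilter SA w) (qf, rA) ∧
          (∀ x ∈ rA, x ∈ A.τ qf) ∧ qf ∈ A.Facc) ∧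
        Relation.ReflTransGen B.Step (p₀, sfilter SB w) (p, sfilter SB cf.2))) := by
  induction h with
  | refl =>
    exact ⟨fun x hx => Or.inr (Or.inr hx),
      Or.inl ⟨q₀, rfl, Relation.ReflTransGen.refl, rfl⟩⟩
  | @tail b cf hrt hstep ih =>
    obtain ⟨hJ, hinv⟩ := ih
    rcases hinv with ⟨q, hq, rtcA, hBeq⟩ | ⟨p, hp, hAacc, rtcB⟩
    · -- phase A
      rcases hstep with ⟨x, a, y, hwb, hpre, haτ, hδ, hw'⟩ | ⟨htr, hδe, hw'⟩
      · -- deletion step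
        rw [hq] at hδ
        obtain ⟨haSA, haSB, haA, q', hq', hcf1⟩ := hδ
        have hpreA : ∀ e ∈ sfilter SA x, e ∈ A.τ q := by
          intro e he
          obtain ⟨hex, heA⟩ := mem_sfilter.1 he
          have := hpre e hex
          rw [hq] at this
          rcases combine_tau_inl.1 this with ⟨h1, -⟩ | h2
          · exact h1
          · exact absurd h2 (Set.disjoint_left.1 hdisj heA)
        have hsplit : sfilter SA b.2 = sfilter SA x ++ a :: sfilter SA y := by
          rw [hwb, sfilter_append, sfilter_cons_pos SA y haSA]
        have hnew : sfilter SA cf.2 = sfilter SA x ++ sfilter SA y := by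
          rw [hw', sfilter_append]
        refine ⟨?_, Or.inl ⟨q', hcf1, ?_, ?_⟩⟩
        · intro e he
          rcases hJ e he with h1 | h1 | h1
          · exact Or.inl h1
          · exact Or.inr (Or.inl h1)
          · rw [hwb] at h1
            rcases List.mem_append.1 h1 with h2 | h2
            · exact Or.inr (Or.inr (by rw [hw']; simp [h2]))
            · rcases List.mem_cons.1 h2 with rfl | h3
              · exact Or.inl haSA
              · exact Or.inr (Or.inr (by rw [hw']; simp [h3]))
        · refine rtcA.tail (Or.inl ⟨sfilter SA x, a, sfilter SA y, hsplit, hpreA, haA, ?_, hnew⟩)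
          exact hq'
        · rw [hw', ← hBeq, hwb, sfilter_append, sfilter_append,
            sfilter_cons_neg SB y haSB]
      · -- end-of-tape step
        rw [hq] at hδe
        have htrA : ∀ e ∈ sfilter SA b.2, e ∈ A.τ q := by
          intro e he
          obtain ⟨heb, heA⟩ := mem_sfilter.1 he
          have := htr e heb
          rw [hq] at this
          rcases combine_tau_inl.1 this with ⟨h1, -⟩ | h2
          · exact h1
          · exact absurd h2 (Set.disjoint_left.1 hdisj heA)
        have hJ' : ∀ x ∈ w, x ∈ SA ∨ x ∈ SB ∨ x ∈ cf.2 := by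
          intro e he
          rcases hJ e he with h1 | h1 | h1
          · exact Or.inl h1
          · exact Or.inr (Or.inl h1)
          · exact Or.inr (Or.inr (by rw [hw']; exact h1))
        rcases (Set.mem_union _ _ _).1 hδe with hmem | hmem
        · obtain ⟨q', hq', hcf1⟩ := hmem
          refine ⟨hJ', Or.inl ⟨q', hcf1.symm, ?_, by rw [hw']; exact hBeq⟩⟩
          rw [hw']
          exact rtcA.tail (Or.inr ⟨htrA, hq', rfl⟩)
        · obtain ⟨hFacc, hcf1⟩ := hmem
          refine ⟨hJ', Or.inr ⟨p₀, hcf1, ⟨q, sfilter SA b.2, rtcA, htrA, hFacc⟩, ?_⟩⟩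
          rw [hw', hBeq]
    · -- phase B
      rcases hstep with ⟨x, a, y, hwb, hpre, haτ, hδ, hw'⟩ | ⟨htr, hδe, hw'⟩
      · -- deletion step
        rw [hp] at hδ
        rcases hδ with ⟨haSA, haSB, hcf1⟩ | ⟨haSB, haB, p', hp', hcf1⟩
        · -- residual SA letter deleted, B unchanged
          refine ⟨?_, Or.inr ⟨p, hcf1, hAacc, ?_⟩⟩
          · intro e he
            rcases hJ e he with h1 | h1 | h1
            · exact Or.inl h1
            · exact Or.inr (Or.inl h1)
            · rw [hwb] at h1
              rcases List.mem_append.1 h1 with h2 | h2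
              · exact Or.inr (Or.inr (by rw [hw']; simp [h2]))
              · rcases List.mem_cons.1 h2 with rfl | h3
                · exact Or.inl haSA
                · exact Or.inr (Or.inr (by rw [hw']; simp [h3]))
          · have : sfilter SB cf.2 = sfilter SB b.2 := by
              rw [hw', hwb, sfilter_append, sfilter_append, sfilter_cons_neg SB y haSB]
            rw [this]
            exact rtcB
        · -- genuine B letter deleted
          have hpreB : ∀ e ∈ sfilter SB x, e ∈ B.τ p := by
            intro e he
            obtain ⟨hex, -⟩ := mem_sfilter.1 he
            have := hpre e hex
            rw [hp] at this
            exact (combine_tau_inr.1 this).1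
          have hsplit : sfilter SB b.2 = sfilter SB x ++ a :: sfilter SB y := by
            rw [hwb, sfilter_append, sfilter_cons_pos SB y haSB]
          have hnew : sfilter SB cf.2 = sfilter SB x ++ sfilter SB y := by
            rw [hw', sfilter_append]
          refine ⟨?_, Or.inr ⟨p', hcf1, hAacc, ?_⟩⟩
          · intro e he
            rcases hJ e he with h1 | h1 | h1
            · exact Or.inl h1
            · exact Or.inr (Or.inl h1)
            · rw [hwb] at h1
              rcases List.mem_append.1 h1 with h2 | h2
              · exact Or.inr (Or.inr (by rw [hw']; simp [h2]))
              · rcases List.mem_cons.1 h2 with rfl | h3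
                · exact Or.inr (Or.inl haSB)
                · exact Or.inr (Or.inr (by rw [hw']; simp [h3]))
          · refine rtcB.tail (Or.inl ⟨sfilter SB x, a, sfilter SB y, hsplit, hpreB, haB, ?_, hnew⟩)
            exact hp'
      · -- end-of-tape step
        rw [hp] at hδe
        obtain ⟨p', hp', hcf1⟩ := hδe
        have htrB : ∀ e ∈ sfilter SB b.2, e ∈ B.τ p := by
          intro e he
          obtain ⟨heb, -⟩ := mem_sfilter.1 he
          have := htr e heb
          rw [hp] at this
          exact (combine_tau_inr.1 this).1
        refine ⟨?_, Or.inr ⟨p', hcf1.symm, hAacc, ?_⟩⟩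
        · intro e he
          rcases hJ e he with h1 | h1 | h1
          · exact Or.inl h1
          · exact Or.inr (Or.inl h1)
          · exact Or.inr (Or.inr (by rw [hw']; exact h1))
        · rw [hw']
          exact rtcB.tail (Or.inr ⟨htrB, hp', rfl⟩)

end Combine

/-- ℒ(RDFAwtl) is closed under disjoint shuffle. -/
theorem RDFAwtl_closed_disjoint_shuffle (α : Type) [Fintype α]
    (SA SB : Set α) (hdisj : Disjoint SA SB)
    (LA LB : Set (List α))
    (hLA : LA ∈ RDFAwtlLangs α) (hLB : LB ∈ RDFAwtlLangs α)
    (hA : ∀ w ∈ LA, ∀ x ∈ w, x ∈ SA) (hB : ∀ w ∈ LB, ∀ x ∈ w, x ∈ SB) :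
    shuffleLang LA LB ∈ RDFAwtlLangs α := by
  obtain ⟨QA, instQA, A, hdetA, hlangA⟩ := hLA
  obtain ⟨QB, instQB, B, hdetB, hlangB⟩ := hLB
  obtain ⟨⟨qa₀, hIA⟩, hδA, hδendA⟩ := hdetA
  obtain ⟨⟨p₀, hIB⟩, hδB, hδendB⟩ := hdetB
  refine ⟨QA ⊕ QB, inferInstance, combineAut SA SB A B p₀, ⟨?_, ?_, ?_⟩, ?_⟩
  · exact ⟨Sum.inl qa₀, by simp [combineAut, hIA]⟩
  · rintro (q | p) a x hx y hy
    · obtain ⟨-, -, -, x', hx', rfl⟩ := hx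
      obtain ⟨-, -, -, y', hy', rfl⟩ := hy
      rw [hδA q a hx' hy']
    · rcases hx with ⟨haSA, haSB, rfl⟩ | ⟨haSB, haB, x', hx', rfl⟩ <;>
        rcases hy with ⟨haSA', haSB', rfl⟩ | ⟨haSB', haB', y', hy', rfl⟩
      · rfl
      · exact absurd haSB' haSB
      · exact absurd haSB haSB'
      · rw [hδB p a hx' hy']
  · rintro (q | p) x hx y hy
    · rcases (Set.mem_union _ _ _).1 hx with ⟨x', hx', rfl⟩ | ⟨hF, rfl⟩ <;>
        rcases (Set.mem_union _ _ _).1 hy with ⟨y', hy', rfl⟩ | ⟨hF', rfl⟩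
      · rw [hδendA q hx' hy']
      · rw [A.accEnd q hF'] at hx'
        exact absurd hx' (Set.notMem_empty _)
      · rw [A.accEnd q hF] at hy'
        exact absurd hy' (Set.notMem_empty _)
      · rfl
    · obtain ⟨x', hx', rfl⟩ := hx
      obtain ⟨y', hy', rfl⟩ := hy
      rw [hδendB p hx' hy']
  · ext w
    constructor
    · -- combined automaton accepts w → w is a shuffle
      rintro ⟨s₀, hs₀, sf, wf, rtc, htrf, hFf⟩
      obtain ⟨q₀, hq₀, rfl⟩ := hs₀
      obtain ⟨pf, hpf, hsf⟩ := hFf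
      obtain ⟨hJ, hinv⟩ := combine_inv hdisj rtc
      rcases hinv with ⟨q, heq, -, -⟩ | ⟨p, heq, ⟨qf, rA, rtcA, htrA, hqfF⟩, rtcB⟩
      · rw [← hsf] at heq; exact absurd heq (by simp)
      · have hppf : p = pf := by
          rw [← hsf] at heq
          exact (Sum.inr.inj heq.symm)
        subst hppf
        have hwfB : ∀ e ∈ wf, e ∈ B.τ p ∧ e ∈ SB := by
          intro e he
          have := htrf e he
          rw [← hsf] at this
          exact combine_tau_inr.1 this
        have hall : ∀ e ∈ w, e ∈ SA ∨ e ∈ SB := by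
          intro e he
          rcases hJ e he with h | h | h
          · exact Or.inl h
          · exact Or.inr h
          · exact Or.inr (hwfB e h).2
        refine ⟨sfilter SA w, ?_, sfilter SB w, ?_, shuffles_sfilter hdisj hall⟩
        · rw [← hlangA]
          exact ⟨q₀, hq₀, qf, rA, rtcA, htrA, hqfF⟩
        · rw [← hlangB]
          refine ⟨p₀, by rw [hIB]; rfl, p, sfilter SB wf, rtcB, ?_, hpf⟩
          intro e he
          exact (hwfB e (mem_sfilter.1 he).1).1
    · -- w is a shuffle → combined automaton accepts w
      rintro ⟨u, huL, v, hvL, hshuf⟩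
      obtain ⟨hfu, hfv, hall⟩ := sfilter_of_shuffles hdisj hshuf (hA u huL) (hB v hvL)
      have huacc : A.Accepts u := by rw [← hlangA] at huL; exact huL
      have hvacc : B.Accepts v := by rw [← hlangB] at hvL; exact hvL
      obtain ⟨q₀, hq₀, qf, u', rtcA, htrA, hqfF⟩ := huacc
      obtain ⟨p₀', hp₀', pf, v', rtcB, htrB, hpfF⟩ := hvacc
      have hp₀'eq : p₀' = p₀ := by rw [hIB] at hp₀'; exact hp₀'
      rw [hp₀'eq] at rtcB
      obtain ⟨w₁, path1, g1, g2, g3⟩ :=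
        combine_rtcA (B := B) (p₀ := p₀) hdisj rtcA hfu hall
      have hg1 : sfilter SA w₁ = u' := g1
      have hswitch : (combineAut SA SB A B p₀).Step (Sum.inl qf, w₁) (Sum.inr p₀, w₁) := by
        refine Or.inr ⟨?_, Set.mem_union_right _ ⟨hqfF, rfl⟩, rfl⟩
        intro e he
        rcases g3 e he with heA | heB
        · have : e ∈ u' := hg1 ▸ mem_sfilter.2 ⟨he, heA⟩
          exact combine_tau_inl.2 (Or.inl ⟨htrA e this, heA⟩)
        · exact combine_tau_inl.2 (Or.inr heB)
      obtain ⟨w₂, path2, k1, k2⟩ :=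
        combine_rtcB (A := A) (p₀ := p₀) hdisj rtcB (g2.trans hfv) g3
      have hk1 : sfilter SB w₂ = v' := k1
      have hv'S : ∀ e ∈ v', e ∈ SB := fun e he =>
        (mem_sfilter.1 (hk1 ▸ he : e ∈ sfilter SB w₂)).2
      have path3 : Relation.ReflTransGen (combineAut SA SB A B p₀).Step
          (Sum.inr pf, w₂) (Sum.inr pf, v') := by
        have := combine_delSA' (A := A) (B := B) (p₀ := p₀) hdisj w₂ [] k2
          (by rw [hk1]; exact htrB)
        rwa [List.append_nil, List.append_nil, hk1] at this
      refine ⟨Sum.inl q₀, ⟨q₀, hq₀, rfl⟩, Sum.inr pf, v',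
        ((path1.tail hswitch).trans path2).trans path3, ?_, ⟨pf, hpfF, rfl⟩⟩
      intro e he
      exact combine_tau_inr.2 ⟨htrB e he, hv'S e he⟩
end
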